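/- arXiv:2309.02644 — 12 statements merged into one kernel-verified Lean document; each statement's English description precedes it below -/
import Mathlib

section
/- A nonempty subset σ ⊆ G is a Scarf face of I if and only if both of the following hold: (1) L(σ \ {v}) ≠ L(σ) for every v ∈ σ, and (2) L(σ ∪ {v}) ≠ L(σ) for every v ∈ G \ σ. In particular, if σ has exactly two elements, then σ is a Scarf face if and only if condition (2) holds. -/
open Finset

/-- The label of a set `σ` of exponent vectors: the componentwise maximum
(the exponent vector of the lcm of the monomials corresponding to `σ`,
with `lbl ∅ = 0`). -/
def lbl {n : ℕ} (σ : Finset (Fin n → ℕ)) : Fin n → ℕ :=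
  fun k => σ.sup (fun g => g k)

lemma lbl_mono {n : ℕ} {σ τ : Finset (Fin n → ℕ)} (h : σ ⊆ τ) : lbl σ ≤ lbl τ :=
  fun k => Finset.sup_mono h

lemma le_lbl {n : ℕ} {σ : Finset (Fin n → ℕ)} {g} (h : g ∈ σ) : g ≤ lbl σ :=
  fun k => Finset.le_sup (f := fun g => g k) h

lemma lbl_insert_of_le {n : ℕ} {σ : Finset (Fin n → ℕ)} {v}
    (h : v ≤ lbl σ) : lbl (insert v σ) = lbl σ := by
  funext k
  simp only [lbl, Finset.sup_insert]
  exact sup_eq_right.mpr (h k)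

lemma lbl_singleton {n : ℕ} (v : Fin n → ℕ) : lbl ({v} : Finset (Fin n → ℕ)) = v := by
  funext k; simp [lbl]

/-- Lemma 2.1 (l:expansion): a nonempty `σ ⊆ G` is a Scarf face of the monomial
ideal with (pairwise incomparable, nonzero) exponent vectors `G` iff
(1) removing any vertex changes the label and (2) adding any vertex changes the
label.  If `σ` has exactly two elements, condition (2) alone suffices. -/
theorem stmt0 {n : ℕ} (hn : 1 ≤ n) (G : Finset (Fin n → ℕ))
    (hG0 : ∀ g ∈ G, g ≠ 0)
    (hGincomp : ∀ g ∈ G, ∀ h ∈ G, g ≠ h → ¬ g ≤ h)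
    (σ : Finset (Fin n → ℕ)) (hσG : σ ⊆ G) (hσ : σ.Nonempty) :
    ((∀ τ : Finset (Fin n → ℕ), τ.Nonempty → τ ⊆ G → lbl τ = lbl σ → τ = σ) ↔
      ((∀ v ∈ σ, lbl (σ.erase v) ≠ lbl σ) ∧
       (∀ v ∈ G, v ∉ σ → lbl (insert v σ) ≠ lbl σ))) ∧
    (σ.card = 2 →
      ((∀ τ : Finset (Fin n → ℕ), τ.Nonempty → τ ⊆ G → lbl τ = lbl σ → τ = σ) ↔
        (∀ v ∈ G, v ∉ σ → lbl (insert v σ) ≠ lbl σ))) := by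
  -- backward direction from (1) ∧ (2)
  have back : (∀ v ∈ σ, lbl (σ.erase v) ≠ lbl σ) →
      (∀ v ∈ G, v ∉ σ → lbl (insert v σ) ≠ lbl σ) →
      (∀ τ : Finset (Fin n → ℕ), τ.Nonempty → τ ⊆ G → lbl τ = lbl σ → τ = σ) := by
    intro h1 h2 τ hτne hτG hlbl
    have hτσ : τ ⊆ σ := by
      intro v hv
      by_contra hvσ
      have hvle : v ≤ lbl σ := hlbl ▸ le_lbl hv
      exact h2 v (hτG hv) hvσ (lbl_insert_of_le hvle)
    rcases eq_or_ne τ σ with h | h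
    · exact h
    · exfalso
      obtain ⟨v, hvσ, hvτ⟩ := Finset.exists_of_ssubset ⟨hτσ, fun hst => h (Finset.Subset.antisymm hτσ hst)⟩
      have hsub : τ ⊆ σ.erase v := Finset.subset_erase.mpr ⟨hτσ, hvτ⟩
      have hle : lbl σ ≤ lbl (σ.erase v) := hlbl ▸ lbl_mono hsub
      have hge : lbl (σ.erase v) ≤ lbl σ := lbl_mono (Finset.erase_subset _ _)
      exact h1 v hvσ (le_antisymm hge hle)
  -- forward direction to (1)
  have fwd1 : (∀ τ : Finset (Fin n → ℕ), τ.Nonempty → τ ⊆ G → lbl τ = lbl σ → τ = σ) →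
      ∀ v ∈ σ, lbl (σ.erase v) ≠ lbl σ := by
    intro hs v hv heq
    rcases (σ.erase v).eq_empty_or_nonempty with he | hne
    · -- then σ = {v}, lbl σ = lbl ∅ = 0, so v = 0
      have hσv : σ = {v} := by
        apply Finset.Subset.antisymm
        · intro x hx
          rcases eq_or_ne x v with rfl | hxv
          · simp
          · exact absurd (Finset.mem_erase.mpr ⟨hxv, hx⟩) (by simp [he])
        · exact Finset.singleton_subset_iff.mpr hv
      have : lbl σ = 0 := by
        rw [← heq, he]; funext k; simp [lbl]
      rw [hσv, lbl_singleton] at this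
      exact hG0 v (hσG hv) this
    · have := hs (σ.erase v) hne ((Finset.erase_subset _ _).trans hσG) heq
      exact Finset.notMem_erase v σ (by rw [this]; exact hv)
  -- forward direction to (2)
  have fwd2 : (∀ τ : Finset (Fin n → ℕ), τ.Nonempty → τ ⊆ G → lbl τ = lbl σ → τ = σ) →
      ∀ v ∈ G, v ∉ σ → lbl (insert v σ) ≠ lbl σ := by
    intro hs v hvG hvσ heq
    have := hs (insert v σ) (Finset.insert_nonempty _ _)
      (Finset.insert_subset hvG hσG) heq
    exact hvσ (this ▸ Finset.mem_insert_self v σ)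
  constructor
  · exact ⟨fun hs => ⟨fwd1 hs, fwd2 hs⟩, fun ⟨h1, h2⟩ => back h1 h2⟩
  · intro hcard
    constructor
    · exact fwd2
    · intro h2
      -- condition (1) is automatic for two-element σ by incomparability
      have h1 : ∀ v ∈ σ, lbl (σ.erase v) ≠ lbl σ := by
        obtain ⟨a, b, hab, rfl⟩ := Finset.card_eq_two.mp hcard
        have key : ∀ x y : Fin n → ℕ, x ∈ G → y ∈ G → x ≠ y →
            lbl ({x, y} : Finset (Fin n → ℕ)) ≠ y := by
          intro x y hxG hyG hxy h
          apply hGincomp x hxG y hyG hxy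
          intro k
          have : x k ≤ lbl ({x, y} : Finset (Fin n → ℕ)) k :=
            le_lbl (by simp) k
          simpa [h] using this
        have haG : a ∈ G := hσG (by simp)
        have hbG : b ∈ G := hσG (by simp)
        have ea : ({a, b} : Finset (Fin n → ℕ)).erase a = {b} := by
          ext x; simp only [Finset.mem_erase, Finset.mem_insert, Finset.mem_singleton]
          constructor
          · rintro ⟨hx, rfl | rfl⟩
            · exact absurd rfl hx
            · rfl
          · rintro rfl; exact ⟨Ne.symm hab, Or.inr rfl⟩
        have eb : ({a, b} : Finset (Fin n → ℕ)).erase b = {a} := by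
          ext x; simp only [Finset.mem_erase, Finset.mem_insert, Finset.mem_singleton]
          constructor
          · rintro ⟨hx, rfl | rfl⟩
            · rfl
            · exact absurd rfl hx
          · rintro rfl; exact ⟨hab, Or.inl rfl⟩
        intro v hv heq
        rcases Finset.mem_insert.mp hv with rfl | hv'
        · rw [ea, lbl_singleton] at heq
          exact key v b haG hbG hab heq.symm
        · obtain rfl := Finset.mem_singleton.mp hv'
          rw [eb, lbl_singleton, Finset.pair_comm] at heq
          exact key v a hbG haG (Ne.symm hab) heq.symm
      exact back h1 h2
end

section
/- Let n ≥ 1 and let M_1,…,M_q be distinct subsets of [n] with M_i ⊄ M_j for all i ≠ j. If a nonempty subset σ ⊆ N^r_q is a Scarf face of I^r in the m-labeling (i.e., every nonempty τ ⊆ N^r_q with L_m(τ) = L_m(σ) equals σ), then σ is a Scarf face of E_q^r, i.e., every nonempty τ ⊆ N^r_q with L(τ) = L(σ) equals σ. In other words, Scarf(I^r) ⊆ Scarf(E_q^r). -/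
open Finset

/-- The exponent of the variable `x_A` in `lcm(ε^a : a ∈ σ)`:
`eLabel σ A = max_{a ∈ σ} ∑_{i ∈ A} a i` (and `0` if `σ = ∅`). -/
def eLabel {q : ℕ} (σ : Finset (Fin q → ℕ)) (A : Finset (Fin q)) : ℕ :=
  σ.sup (fun a => ∑ i ∈ A, a i)

/-- `σ` is a face of the Scarf complex of `E_q^r`: a nonempty subset of
`N^r_q` such that every nonempty `τ ⊆ N^r_q` with the same label equals `σ`. -/
def IsScarf (q r : ℕ) (σ : Finset (Fin q → ℕ)) : Prop :=
  σ.Nonempty ∧ (∀ a ∈ σ, ∑ i, a i = r) ∧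
    ∀ τ : Finset (Fin q → ℕ), τ.Nonempty → (∀ a ∈ τ, ∑ i, a i = r) →
      (∀ A : Finset (Fin q), A.Nonempty → eLabel τ A = eLabel σ A) → τ = σ

/-- The set `aU = {c ∈ N^r_q : a i ≤ c i ≤ a i + 1 for all i}`, i.e. the
vertex set of the face `ε^a · U_q^{r-|a|}` of the Taylor complex of `E_q^r`. -/
def aUF (q r : ℕ) (a : Fin q → ℕ) : Finset (Fin q → ℕ) :=
  (Finset.Icc a (a + 1)).filter (fun c => ∑ i, c i = r)

/-- The exponent of `x_k` in `lcm(m^a : a ∈ σ)`, where `m_j = ∏_{k ∈ M j} x_k`. -/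
def mLabel {n q : ℕ} (M : Fin q → Finset (Fin n)) (σ : Finset (Fin q → ℕ)) (k : Fin n) : ℕ :=
  σ.sup (fun a => ∑ j ∈ Finset.univ.filter (fun j => k ∈ M j), a j)

/-- Proposition (p:psi-Scarf): `Scarf(I^r) ⊆ Scarf(E_q^r)`, where `I` is
minimally generated by the square-free monomials with supports `M 1, …, M q`. -/
theorem stmt1 (n q r : ℕ) (hn : 1 ≤ n) (hq : 1 ≤ q) (hr : 1 ≤ r)
    (M : Fin q → Finset (Fin n))
    (hM : ∀ i j : Fin q, i ≠ j → ¬ M i ⊆ M j)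
    (σ : Finset (Fin q → ℕ)) (hσ : σ.Nonempty) (hσr : ∀ a ∈ σ, ∑ i, a i = r)
    (hScarfI : ∀ τ : Finset (Fin q → ℕ), τ.Nonempty → (∀ a ∈ τ, ∑ i, a i = r) →
      (∀ k : Fin n, mLabel M τ k = mLabel M σ k) → τ = σ) :
    IsScarf q r σ := by
  refine ⟨hσ, hσr, ?_⟩
  intro τ hτ hτr hlab
  apply hScarfI τ hτ hτr
  intro k
  by_cases h : (Finset.univ.filter (fun j => k ∈ M j)).Nonempty
  · exact hlab _ h
  · rw [Finset.not_nonempty_iff_eq_empty] at h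
    simp only [mLabel, h, Finset.sum_empty]
    rw [Finset.sup_const hτ, Finset.sup_const hσ]
end

section
/- A nonempty subset σ ⊆ N^r_q is a Scarf face of E_q^r if and only if for every nonempty subset σ' ⊆ σ the following holds: every b ∈ N^r_q satisfying ∑_{i∈A} b_i ≤ L(σ')(A) for all nonempty A ⊆ [q] (i.e., every lattice point of the polyhedron determined by σ') already belongs to σ'. -/
open Finset

lemma eLabel_mono {q : ℕ} {σ τ : Finset (Fin q → ℕ)} (h : σ ⊆ τ)
    (A : Finset (Fin q)) : eLabel σ A ≤ eLabel τ A :=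
  Finset.sup_mono h

lemma le_eLabel {q : ℕ} {σ : Finset (Fin q → ℕ)} {a : Fin q → ℕ} (h : a ∈ σ)
    (A : Finset (Fin q)) : ∑ i ∈ A, a i ≤ eLabel σ A :=
  Finset.le_sup h

/-- Proposition (p:faces): a nonempty `σ ⊆ N^r_q` is a Scarf face of `E_q^r`
iff for every nonempty `σ' ⊆ σ`, the only lattice points of the polyhedron
`P_{σ'}` (i.e. the `b ∈ N^r_q` with `∑_{i ∈ A} b i ≤ L(σ')(A)` for all
nonempty `A`) are the elements of `σ'`. -/
theorem stmt3 (q r : ℕ) (hq : 1 ≤ q) (hr : 1 ≤ r)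
    (σ : Finset (Fin q → ℕ)) (hσ : σ.Nonempty) (hσr : ∀ a ∈ σ, ∑ i, a i = r) :
    IsScarf q r σ ↔
      ∀ σ' ⊆ σ, σ'.Nonempty →
        ∀ b : Fin q → ℕ, ∑ i, b i = r →
          (∀ A : Finset (Fin q), A.Nonempty → ∑ i ∈ A, b i ≤ eLabel σ' A) →
          b ∈ σ' := by
  constructor
  · rintro ⟨-, -, hs⟩ σ' hsub hne b hb hlab
    -- first: b ∈ σ
    have hbσ : b ∈ σ := by
      have h1 : insert b σ = σ := by
        apply hs _ (insert_nonempty _ _)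
        · intro a ha
          rcases Finset.mem_insert.mp ha with rfl | ha
          · exact hb
          · exact hσr a ha
        · intro A hA
          unfold eLabel
          rw [Finset.sup_insert]
          exact sup_eq_right.mpr ((hlab A hA).trans (eLabel_mono hsub A))
      rw [← h1]; exact Finset.mem_insert_self _ _
    by_contra hbσ'
    have hsub' : σ' ⊆ σ.erase b := fun x hx =>
      Finset.mem_erase.mpr ⟨fun h => hbσ' (h ▸ hx), hsub hx⟩
    have h2 : σ.erase b = σ := by
      apply hs _ (hne.mono hsub')
      · exact fun a ha => hσr a (Finset.erase_subset _ _ ha)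
      · intro A hA
        refine le_antisymm (eLabel_mono (Finset.erase_subset _ _) A) ?_
        refine Finset.sup_le fun a ha => ?_
        by_cases hab : a = b
        · exact hab ▸ (hlab A hA).trans (eLabel_mono hsub' A)
        · exact le_eLabel (Finset.mem_erase.mpr ⟨hab, ha⟩) A
    exact (Finset.notMem_erase b σ) (h2.symm ▸ hbσ)
  · intro H
    refine ⟨hσ, hσr, fun τ hτne hτr hτlab => ?_⟩
    have hts : τ ⊆ σ := by
      intro b hb
      exact H σ (le_refl _) hσ b (hτr b hb)
        (fun A hA => (le_eLabel hb A).trans_eq (hτlab A hA))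
    refine Finset.Subset.antisymm hts fun a ha => ?_
    exact H τ hts hτne a (hσr a ha)
      (fun A hA => (le_eLabel ha A).trans_eq (hτlab A hA).symm)
end

section
/- Let 1 ≤ r' < r and let a ∈ N^{r'}_q. For a nonempty finite subset σ ⊆ N^{r−r'}_q, write a + σ = {a + v : v ∈ σ} ⊆ N^r_q. Then σ is a Scarf face of E_q^{r−r'} if and only if a + σ is a Scarf face of E_q^r. In particular, translation by a maps the Scarf complex of E_q^{r−r'} into the Scarf complex of E_q^r. -/
open Finset

lemma sup_const_add' {α : Type*} (s : Finset α) (hs : s.Nonempty) (f : α → ℕ) (c : ℕ) :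
    s.sup (fun x => c + f x) = c + s.sup f := by
  induction hs using Finset.Nonempty.cons_induction with
  | singleton a => simp
  | cons a s ha hs ih =>
    simp only [Finset.sup_cons, ih]
    cases le_total (f a) (s.sup f) with
    | inl h => rw [sup_eq_right.mpr h, sup_eq_right.mpr (by omega)]
    | inr h => rw [sup_eq_left.mpr h, sup_eq_left.mpr (by omega)]

lemma sup_tsub' {α : Type*} (s : Finset α) (f : α → ℕ) (c : ℕ) :
    s.sup (fun x => f x - c) = s.sup f - c := by
  induction s using Finset.cons_induction with
  | empty => simp
  | cons a s ha ih =>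
    simp only [Finset.sup_cons, ih]
    cases le_total (f a) (s.sup f) with
    | inl h => rw [sup_eq_right.mpr (by omega), sup_eq_right.mpr h]
    | inr h => rw [sup_eq_left.mpr (by omega), sup_eq_left.mpr h]

lemma eLabel_image' {q : ℕ} (a : Fin q → ℕ) (s : Finset (Fin q → ℕ)) (hs : s.Nonempty)
    (A : Finset (Fin q)) :
    eLabel (s.image (fun v => a + v)) A = (∑ i ∈ A, a i) + eLabel s A := by
  unfold eLabel
  rw [Finset.sup_image]
  rw [← sup_const_add' s hs (fun v => ∑ i ∈ A, v i) (∑ i ∈ A, a i)]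
  apply Finset.sup_congr rfl
  intro c _
  simp [Finset.sum_add_distrib]

/-- Proposition (p:Scarf-face): for `1 ≤ r' < r` and `a ∈ N^{r'}_q`, a nonempty
`σ ⊆ N^{r-r'}_q` is a Scarf face of `E_q^{r-r'}` iff its translate
`a + σ = {a + v : v ∈ σ}` is a Scarf face of `E_q^r`. -/
theorem stmt4 (q r r' : ℕ) (hq : 1 ≤ q) (hr' : 1 ≤ r') (hr : r' < r)
    (a : Fin q → ℕ) (ha : ∑ i, a i = r')
    (σ : Finset (Fin q → ℕ)) (hσ : σ.Nonempty)
    (hσr : ∀ v ∈ σ, ∑ i, v i = r - r') :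
    IsScarf q (r - r') σ ↔ IsScarf q r (σ.image (fun v => a + v)) := by
  haveI : Nonempty (Fin q) := ⟨⟨0, hq⟩⟩
  have hainj : Function.Injective (fun v : Fin q → ℕ => a + v) :=
    fun x y h => by simpa using add_right_injective a h
  have hsum_img : ∀ v ∈ σ, ∑ i, (a + v) i = r := by
    intro v hv
    have := hσr v hv
    simp only [Pi.add_apply, Finset.sum_add_distrib, ha, this]
    omega
  have hai_lt : ∀ i, a i < r := by
    intro i
    have : a i ≤ ∑ j, a j := Finset.single_le_sum (fun j _ => Nat.zero_le _) (mem_univ i)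
    omega
  constructor
  · rintro ⟨-, -, hu⟩
    refine ⟨hσ.image _, by simpa using hsum_img, ?_⟩
    intro τ hτne hτr hlab
    -- every element of τ dominates a
    have hge : ∀ c ∈ τ, ∀ i, a i ≤ c i := by
      intro c hc i
      by_contra hlt
      push_neg at hlt
      have hci_le : c i ≤ r := by
        have : c i ≤ ∑ j, c j := Finset.single_le_sum (fun j _ => Nat.zero_le _) (mem_univ i)
        rw [hτr c hc] at this; exact this
      rcases Finset.eq_empty_or_nonempty ((univ : Finset (Fin q)).erase i) with hA | hA
      · -- then univ = {i}
        have huniv : (univ : Finset (Fin q)) = {i} := by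
          rcases (Finset.erase_eq_empty_iff _ _).mp hA with h | h
          · exact absurd h (Finset.univ_nonempty.ne_empty)
          · exact h
        have h1 : a i = r' := by rw [← ha, huniv]; simp
        have h2 : c i = r := by rw [← hτr c hc, huniv]; simp
        omega
      · have hlabA := hlab _ hA
        have h1 : r - c i ≤ eLabel τ ((univ : Finset (Fin q)).erase i) := by
          have hsum : ∑ j ∈ (univ : Finset (Fin q)).erase i, c j = r - c i := by
            have := Finset.add_sum_erase (univ : Finset (Fin q)) c (mem_univ i)
            rw [hτr c hc] at this
            omega
          rw [← hsum]
          exact Finset.le_sup hc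
        have h2 : eLabel (σ.image (fun v => a + v)) ((univ : Finset (Fin q)).erase i)
            ≤ r - a i := by
          apply Finset.sup_le
          intro b hb
          rcases Finset.mem_image.mp hb with ⟨v, hv, rfl⟩
          have hbsum := hsum_img v hv
          have := Finset.add_sum_erase (univ : Finset (Fin q)) (a + v) (mem_univ i)
          rw [hbsum] at this
          have hbi : a i ≤ (a + v) i := by simp
          omega
        have := hai_lt i
        omega
    -- translate τ back
    set τ' : Finset (Fin q → ℕ) := τ.image (fun c => c - a) with hτ'
    have hτ'ne : τ'.Nonempty := hτne.image _
    have hτ'r : ∀ v ∈ τ', ∑ i, v i = r - r' := by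
      intro v hv
      rcases Finset.mem_image.mp hv with ⟨c, hc, rfl⟩
      have hsum : ∑ i, ((c - a) i + a i) = ∑ i, c i := by
        apply Finset.sum_congr rfl
        intro i _
        have := hge c hc i
        simp only [Pi.sub_apply]
        omega
      rw [Finset.sum_add_distrib, ha, hτr c hc] at hsum
      omega
    have hτ'lab : ∀ A : Finset (Fin q), A.Nonempty → eLabel τ' A = eLabel σ A := by
      intro A hAne
      have h1 : eLabel τ' A = eLabel τ A - ∑ i ∈ A, a i := by
        unfold eLabel
        rw [Finset.sup_image]
        rw [← sup_tsub' τ (fun c => ∑ i ∈ A, c i) (∑ i ∈ A, a i)]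
        apply Finset.sup_congr rfl
        intro c hc
        simp only [Function.comp]
        have hsum : ∑ i ∈ A, ((c - a) i + a i) = ∑ i ∈ A, c i := by
          apply Finset.sum_congr rfl
          intro i _
          have := hge c hc i
          simp only [Pi.sub_apply]
          omega
        rw [Finset.sum_add_distrib] at hsum
        omega
      rw [h1, hlab A hAne, eLabel_image' a σ hσ A]
      omega
    have hτ'σ : τ' = σ := hu τ' hτ'ne hτ'r hτ'lab
    have hback : τ'.image (fun v => a + v) = τ := by
      rw [hτ', Finset.image_image]
      have heq : τ.image ((fun v => a + v) ∘ (fun c => c - a)) = τ.image id :=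
        Finset.image_congr (fun c hc => funext fun i => by
          have := hge c (by simpa using hc) i
          simp only [Function.comp, Pi.add_apply, Pi.sub_apply, id_eq]
          omega)
      rw [heq, Finset.image_id]
    rw [← hback, hτ'σ]
  · rintro ⟨-, -, hu⟩
    refine ⟨hσ, hσr, ?_⟩
    intro τ hτne hτr hlab
    have himg := hu (τ.image (fun v => a + v)) (hτne.image _)
      (by
        intro b hb
        rcases Finset.mem_image.mp hb with ⟨v, hv, rfl⟩
        have := hτr v hv
        simp only [Pi.add_apply, Finset.sum_add_distrib, ha, this]
        omega)
      (by
        intro A hAne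
        rw [eLabel_image' a τ hτne A, eLabel_image' a σ hσ A, hlab A hAne])
    exact Finset.image_injective hainj himg
end

section
/- Assume q ≥ 2. Then: (i) if a ∈ ℕ^q satisfies r−q < |a| < r and b ∈ ℕ^q satisfies |b| < r and aU ⊆ bU, then a = b; and (ii) for every b ∈ ℕ^q with |b| < r there exists a ∈ ℕ^q with r−q < |a| < r and bU ⊆ aU. Consequently, the sets aU with r−q < |a| < r are exactly the maximal elements, with respect to inclusion, among all sets bU with b ∈ ℕ^q and |b| < r. -/
open Finset

lemma mem_aUF {q r : ℕ} {a c : Fin q → ℕ} :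
    c ∈ aUF q r a ↔ (∀ i, a i ≤ c i) ∧ (∀ i, c i ≤ a i + 1) ∧ ∑ i, c i = r := by
  simp [aUF, Finset.mem_Icc, Pi.le_def, and_assoc]

/-- Lemma (l:facets)(3): for `q ≥ 2`, the sets `aU` with `r - q < |a| < r`
(the condition `r - q < |a|` is written as `r < q + |a|`) are exactly the
maximal elements, with respect to inclusion, among all sets `bU` with
`|b| < r`: (i) any such `aU` contained in a `bU` forces `a = b` (so `aU` is
maximal), and (ii) every `bU` with `|b| < r` is contained in such an `aU`. -/
theorem stmt5 (q r : ℕ) (hq : 2 ≤ q) (hr : 1 ≤ r) :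
    (∀ a b : Fin q → ℕ, r < q + ∑ i, a i → ∑ i, a i < r → ∑ i, b i < r →
      aUF q r a ⊆ aUF q r b → a = b) ∧
    (∀ b : Fin q → ℕ, ∑ i, b i < r →
      ∃ a : Fin q → ℕ, r < q + ∑ i, a i ∧ ∑ i, a i < r ∧ aUF q r b ⊆ aUF q r a) := by
  haveI : NeZero q := ⟨by omega⟩
  have hone : ∀ c : Fin q → ℕ, ∑ j, (c j + 1) = (∑ j, c j) + q := by
    intro c
    rw [Finset.sum_add_distrib]
    simp [Finset.card_univ]
  constructor
  · intro a b ha1 ha2 hb hsub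
    set s := r - ∑ j, a j with hs
    have hs1 : 1 ≤ s := by omega
    have hsq : s < q := by omega
    funext i
    have hcard : s ≤ (univ.erase i).card := by
      rw [Finset.card_erase_of_mem (mem_univ i), Finset.card_univ, Fintype.card_fin]
      omega
    obtain ⟨S, hS, hScard⟩ := Finset.exists_subset_card_eq (s := univ.erase i) (n := s) hcard
    obtain ⟨T, hT, hTcard⟩ := Finset.exists_subset_card_eq (s := univ.erase i) (n := s - 1)
      (le_trans (by omega) hcard)
    have hiS : i ∉ S := fun h => (Finset.mem_erase.mp (hS h)).1 rfl
    have hiT : i ∉ T := fun h => (Finset.mem_erase.mp (hT h)).1 rfl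
    have sumind : ∀ W : Finset (Fin q),
        ∑ j, (a j + if j ∈ W then 1 else 0) = (∑ j, a j) + W.card := by
      intro W
      rw [Finset.sum_add_distrib]
      congr 1
      rw [Finset.sum_ite_mem, Finset.univ_inter, Finset.sum_const, smul_eq_mul, mul_one]
    have hmemc : ∀ W : Finset (Fin q), W.card = s →
        (fun j => a j + if j ∈ W then 1 else 0) ∈ aUF q r b := by
      intro W hW
      apply hsub
      rw [mem_aUF]
      refine ⟨fun j => Nat.le_add_right _ _, fun j => by split <;> omega, ?_⟩
      rw [sumind, hW]; omega
    have h1 := hmemc S hScard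
    have h2 := hmemc (insert i T) (by rw [Finset.card_insert_of_notMem hiT, hTcard]; omega)
    rw [mem_aUF] at h1 h2
    have e1 := h1.1 i
    have e2 := h2.2.1 i
    simp [hiS] at e1
    simp at e2
    omega
  · intro b hb
    rcases lt_trichotomy r (q + ∑ i, b i) with h | h | h
    · exact ⟨b, h, hb, subset_rfl⟩
    · refine ⟨fun j => b j + if j = 0 then 1 else 0, ?_, ?_, ?_⟩
      · rw [Finset.sum_add_distrib]
        simp
        omega
      · rw [Finset.sum_add_distrib]
        simp
        omega
      · intro c hc
        rw [mem_aUF] at hc ⊢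
        obtain ⟨h1, h2, h3⟩ := hc
        have key : ∀ j, c j = b j + 1 := by
          have := (Finset.sum_eq_sum_iff_of_le (s := univ) (f := c)
            (g := fun j => b j + 1) (fun j _ => h2 j)).mp (by rw [hone]; omega)
          exact fun j => this j (mem_univ j)
        refine ⟨fun j => ?_, fun j => ?_, h3⟩ <;>
          · rw [key j]; split <;> omega
    · refine ⟨fun j => if j = 0 then r - 1 else 0, ?_, ?_, ?_⟩
      · simp; omega
      · simp; omega
      · intro c hc
        exfalso
        rw [mem_aUF] at hc
        obtain ⟨h1, h2, h3⟩ := hc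
        have hle : ∑ j, c j ≤ ∑ j, (b j + 1) := Finset.sum_le_sum fun j _ => h2 j
        rw [hone] at hle
        omega
end

section
/- Let a ∈ ℕ^q with r−q < |a| < r and let b ∈ N^r_q with b ∉ aU. Then there exists c ∈ aU such that L(aU ∪ {b}) = L((aU ∪ {b}) \ {c}), i.e., lcm of the monomials indexed by aU ∪ {b} is unchanged upon removing ε^c. -/
open Finset

/-- Proposition (p:german): if `r - q < |a| < r` (written `r < q + |a|` and
`|a| < r`) and `b ∈ N^r_q` with `b ∉ aU`, then there is `c ∈ aU` such that the
lcm of the monomials indexed by `aU ∪ {b}` is unchanged on removing `ε^c`. -/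
theorem stmt7 (q r : ℕ) (hq : 1 ≤ q) (hr : 1 ≤ r) (a : Fin q → ℕ)
    (h1 : r < q + ∑ i, a i) (h2 : ∑ i, a i < r)
    (b : Fin q → ℕ) (hb : ∑ i, b i = r) (hbU : b ∉ aUF q r a) :
    ∃ c ∈ aUF q r a,
      ∀ A : Finset (Fin q),
        eLabel (insert b (aUF q r a)) A = eLabel ((insert b (aUF q r a)).erase c) A := by
  classical
  set s := ∑ i, a i with hs
  obtain ⟨k, hk⟩ : ∃ k, r = s + k := ⟨r - s, by omega⟩
  have hk1 : 1 ≤ k := by omega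
  have hkq : k < q := by omega
  -- membership helper
  have hmem : ∀ T : Finset (Fin q), T.card = k →
      (fun i => if i ∈ T then a i + 1 else a i) ∈ aUF q r a := by
    intro T hT
    simp only [aUF, mem_filter, Finset.mem_Icc]
    refine ⟨⟨?_, ?_⟩, ?_⟩
    · intro i; dsimp only; split <;> omega
    · intro i; simp only [Pi.add_apply, Pi.one_apply]; split <;> omega
    · have : ∀ i : Fin q, (if i ∈ T then a i + 1 else a i) = a i + (if i ∈ T then 1 else 0) := by
        intro i; split <;> omega
      rw [Finset.sum_congr rfl (fun i _ => this i), Finset.sum_add_distrib]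
      rw [Finset.sum_ite_mem, Finset.univ_inter, Finset.sum_const, hT]
      simp [hk, hs]
  -- the integer "excess" function
  set d : Fin q → ℤ := fun i => (b i : ℤ) - (a i : ℤ) with hd
  have hdtot : ∑ i, d i = (k : ℤ) := by
    simp only [hd, Finset.sum_sub_distrib]
    push_cast [← Nat.cast_sum]
    rw [hb, ← hs]
    push_cast
    omega
  -- Step 1: find a maximizing T
  have hne : (Finset.univ.powersetCard k : Finset (Finset (Fin q))).Nonempty := by
    rw [Finset.powersetCard_nonempty]
    simpa using hkq.le
  obtain ⟨T, hTmem, hTmax⟩ :=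
    Finset.exists_max_image (Finset.univ.powersetCard k) (fun T => ∑ i ∈ T, d i) hne
  have hTcard : T.card = k := (Finset.mem_powersetCard.mp hTmem).2
  have hkey : (k : ℤ) ≤ ∑ i ∈ T, d i := by
    by_contra hcon
    push_neg at hcon
    have hsplit : ∑ i ∈ T, d i + ∑ i ∈ Tᶜ, d i = (k : ℤ) := by
      rw [Finset.sum_add_sum_compl]; exact hdtot
    have hjex : ∃ j ∈ Tᶜ, 1 ≤ d j := by
      by_contra hno
      push_neg at hno
      have : ∑ i ∈ Tᶜ, d i ≤ 0 := Finset.sum_nonpos (fun j hj => by linarith [hno j hj])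
      linarith
    obtain ⟨j, hjc, hj1⟩ := hjex
    have hjT : j ∉ T := by simpa using hjc
    have hall : ∀ i ∈ T, 1 ≤ d i := by
      intro i hi
      have hjne : j ∉ T.erase i := fun h => hjT (Finset.mem_of_mem_erase h)
      have hcard' : (insert j (T.erase i)).card = k := by
        rw [Finset.card_insert_of_notMem hjne, Finset.card_erase_of_mem hi, hTcard]
        omega
      have hmem' : insert j (T.erase i) ∈ Finset.univ.powersetCard k :=
        Finset.mem_powersetCard.mpr ⟨Finset.subset_univ _, hcard'⟩
      have hle := hTmax _ hmem'
      rw [Finset.sum_insert hjne, Finset.sum_erase_eq_sub hi] at hle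
      linarith
    have : (T.card : ℤ) ≤ ∑ i ∈ T, d i := by
      calc (T.card : ℤ) = ∑ _i ∈ T, (1 : ℤ) := by simp
        _ ≤ ∑ i ∈ T, d i := Finset.sum_le_sum hall
    rw [hTcard] at this
    linarith
  -- translate to ℕ
  have hTb : ∑ i ∈ T, a i + k ≤ ∑ i ∈ T, b i := by
    have : ((∑ i ∈ T, a i : ℕ) : ℤ) + (k : ℤ) ≤ ((∑ i ∈ T, b i : ℕ) : ℤ) := by
      push_cast
      have : ∑ i ∈ T, d i = (∑ i ∈ T, (b i : ℤ)) - ∑ i ∈ T, (a i : ℤ) := by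
        simp [hd, Finset.sum_sub_distrib]
      linarith [hkey, this]
    exact_mod_cast this
  -- the vertex to remove
  set c : Fin q → ℕ := fun i => if i ∈ T then a i + 1 else a i with hcdef
  have hc : c ∈ aUF q r a := hmem T hTcard
  have hbc : b ≠ c := fun h => hbU (h ▸ hc)
  refine ⟨c, hc, fun A => ?_⟩
  apply le_antisymm
  · -- insert ≤ erase
    apply Finset.sup_le
    intro e he
    by_cases hec : e = c
    · subst hec
      by_cases hAT : A = T
      · subst hAT
        have hcA : ∑ i ∈ A, c i = ∑ i ∈ A, a i + k := by
          have : ∀ i ∈ A, c i = a i + 1 := by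
            intro i hi; simp [hcdef, hi]
          rw [Finset.sum_congr rfl this, Finset.sum_add_distrib, Finset.sum_const, hTcard]
          simp
        have hbmem : b ∈ (insert b (aUF q r a)).erase c :=
          Finset.mem_erase.mpr ⟨hbc, Finset.mem_insert_self _ _⟩
        calc ∑ i ∈ A, c i = ∑ i ∈ A, a i + k := hcA
          _ ≤ ∑ i ∈ A, b i := hTb
          _ ≤ _ := Finset.le_sup hbmem
      · -- find swap pair
        obtain ⟨i, j, hiT, hjT, hdisj⟩ :
            ∃ i j, i ∈ T ∧ j ∉ T ∧ (j ∈ A ∨ i ∉ A) := by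
          by_cases hAsub : A ⊆ T
          · have hss : A ⊂ T := hAsub.ssubset_of_ne hAT
            obtain ⟨i, hiT, hiA⟩ := Finset.exists_of_ssubset hss
            have hTu : T ≠ Finset.univ := by
              intro h
              have := hTcard
              rw [h, Finset.card_univ, Fintype.card_fin] at this
              omega
            obtain ⟨j, hjT⟩ : ∃ j, j ∉ T := by
              by_contra hno
              push_neg at hno
              exact hTu (Finset.eq_univ_iff_forall.mpr hno)
            exact ⟨i, j, hiT, hjT, Or.inr hiA⟩
          · obtain ⟨j, hjA, hjT⟩ := Finset.not_subset.mp hAsub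
            have hTn : T.Nonempty := Finset.card_pos.mp (by omega)
            obtain ⟨i, hiT⟩ := hTn
            exact ⟨i, j, hiT, hjT, Or.inl hjA⟩
        have hij : i ≠ j := by rintro rfl; exact hjT hiT
        set T' : Finset (Fin q) := insert j (T.erase i) with hT'def
        have hjne : j ∉ T.erase i := fun h => hjT (Finset.mem_of_mem_erase h)
        have hT'card : T'.card = k := by
          rw [hT'def, Finset.card_insert_of_notMem hjne, Finset.card_erase_of_mem hiT, hTcard]
          omega
        set c' : Fin q → ℕ := fun x => if x ∈ T' then a x + 1 else a x with hc'def
        have hc' : c' ∈ aUF q r a := hmem T' hT'card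
        have hjT' : j ∈ T' := Finset.mem_insert_self _ _
        have hiT' : i ∉ T' := by
          simp only [hT'def, Finset.mem_insert, Finset.mem_erase]
          rintro (rfl | ⟨hne, _⟩)
          · exact hjT hiT
          · exact hne rfl
        have hc'c : c' ≠ c := by
          intro h
          have := congrFun h j
          simp [hc'def, hcdef, hjT', hjT] at this
        have hc'mem : c' ∈ (insert b (aUF q r a)).erase c :=
          Finset.mem_erase.mpr ⟨hc'c, Finset.mem_insert_of_mem hc'⟩
        -- key pointwise identity
        have hpt : ∀ x, c x + (if x = j then 1 else 0) = c' x + (if x = i then 1 else 0) := by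
          intro x
          have hT'iff : x ∈ T' ↔ (x = j ∨ (x ≠ i ∧ x ∈ T)) := by
            simp [hT'def, Finset.mem_insert, Finset.mem_erase]
          by_cases hxj : x = j
          · subst hxj
            have hxi : x ≠ i := hij.symm
            simp [hcdef, hc'def, hjT, hjT', hxi]
          · by_cases hxi : x = i
            · subst hxi
              simp [hcdef, hc'def, hiT, hiT', hxj]
            · have hx : x ∈ T' ↔ x ∈ T := by
                rw [hT'iff]; simp [hxj, hxi]
              simp only [hcdef, hc'def, if_neg hxj, if_neg hxi, add_zero]
              by_cases hxT : x ∈ T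
              · simp [hxT, hx.mpr hxT]
              · rw [if_neg hxT, if_neg (fun h => hxT (hx.mp h))]
        have hsum : ∑ x ∈ A, c x + (if j ∈ A then 1 else 0)
            = ∑ x ∈ A, c' x + (if i ∈ A then 1 else 0) := by
          have h1' : ∑ x ∈ A, (c x + (if x = j then 1 else 0))
              = ∑ x ∈ A, (c' x + (if x = i then 1 else 0)) :=
            Finset.sum_congr rfl (fun x _ => hpt x)
          rw [Finset.sum_add_distrib, Finset.sum_add_distrib,
            Finset.sum_ite_eq' A j (fun _ => 1), Finset.sum_ite_eq' A i (fun _ => 1)] at h1'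
          exact h1'
        have hle : ∑ x ∈ A, c x ≤ ∑ x ∈ A, c' x := by
          rcases hdisj with hjA | hiA
          · simp only [if_pos hjA] at hsum
            split_ifs at hsum <;> omega
          · simp only [if_neg hiA] at hsum
            split_ifs at hsum <;> omega
        exact hle.trans (Finset.le_sup hc'mem)
    · exact Finset.le_sup (Finset.mem_erase.mpr ⟨hec, he⟩)
  · exact Finset.sup_mono (Finset.erase_subset _ _)
end

section
/- For every a ∈ ℕ^q with r−q < |a| < r, the set aU is a facet of the Scarf complex of E_q^r: (i) aU is a Scarf face of E_q^r, and (ii) every Scarf face σ of E_q^r with aU ⊆ σ satisfies σ = aU. In particular, every nonempty subset of such a set aU is a Scarf face of E_q^r. -/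
open Finset

def ind {q : ℕ} (S : Finset (Fin q)) : Fin q → ℕ := fun i => if i ∈ S then 1 else 0

lemma sum_cS {q : ℕ} (a : Fin q → ℕ) (S A : Finset (Fin q)) :
    ∑ i ∈ A, (a + ind S) i = ∑ i ∈ A, a i + (A ∩ S).card := by
  simp [ind, Pi.add_apply, Finset.sum_add_distrib, Finset.sum_ite, Finset.filter_mem_eq_inter]

lemma ind_inj {q : ℕ} (a : Fin q → ℕ) {S T : Finset (Fin q)} (h : a + ind S = a + ind T) :
    S = T := by
  ext i
  have := congrFun h i
  simp only [Pi.add_apply, ind] at this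
  by_cases hS : i ∈ S <;> by_cases hT : i ∈ T <;> simp_all

lemma mem_aUF_iff {q r : ℕ} {a : Fin q → ℕ} (hs : ∑ i, a i ≤ r) {c : Fin q → ℕ} :
    c ∈ aUF q r a ↔ ∃ S : Finset (Fin q), S.card = r - ∑ i, a i ∧ c = a + ind S := by
  simp only [aUF, mem_filter, Finset.mem_Icc, Pi.le_def, Pi.add_apply, Pi.one_apply]
  constructor
  · rintro ⟨⟨hl, hu⟩, hsum⟩
    have hc : c = a + ind (univ.filter (fun i => a i + 1 ≤ c i)) := by
      funext i
      have h1 := hl i; have h2 := hu i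
      simp only [Pi.add_apply, ind, mem_filter, mem_univ, true_and]
      by_cases h : a i + 1 ≤ c i <;> simp [h] <;> omega
    refine ⟨univ.filter (fun i => a i + 1 ≤ c i), ?_, hc⟩
    have h3 : ∑ i, c i = ∑ i, a i + (univ.filter (fun i => a i + 1 ≤ c i)).card := by
      conv_lhs => rw [hc]
      rw [sum_cS]; congr 1; rw [Finset.univ_inter]
    omega
  · rintro ⟨S, hcard, rfl⟩
    have hsum : ∑ i, (a + ind S) i = ∑ i, a i + S.card := by
      rw [sum_cS, Finset.univ_inter]
    refine ⟨⟨fun i => by simp only [Pi.add_apply, ind]; split <;> omega,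
             fun i => by simp only [Pi.add_apply, ind]; split <;> omega⟩, ?_⟩
    rw [hsum, hcard]; omega

/-- Top-m selection: if `∑ c = r` and `m = r - ∑ a ≤ q`, there is an `m`-set `S`
with `∑_S a + m ≤ ∑_S c`. -/
lemma exists_top (q r : ℕ) (a c : Fin q → ℕ) (hc : ∑ i, c i = r)
    (hs : ∑ i, a i ≤ r) (hm : r - ∑ i, a i ≤ q) :
    ∃ S : Finset (Fin q), S.card = r - ∑ i, a i ∧
      ∑ i ∈ S, a i + (r - ∑ i, a i) ≤ ∑ i ∈ S, c i := by
  set m := r - ∑ i, a i with hmdef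
  set P : Finset (Fin q) := univ.filter (fun i => a i + 1 ≤ c i) with hP
  by_cases h : m ≤ P.card
  · obtain ⟨S, hSP, hScard⟩ := Finset.exists_subset_card_eq h
    refine ⟨S, hScard, ?_⟩
    have : ∑ i ∈ S, (a i + 1) ≤ ∑ i ∈ S, c i :=
      Finset.sum_le_sum (fun i hi => (mem_filter.mp (hSP hi)).2)
    rw [Finset.sum_add_distrib, Finset.sum_const, smul_eq_mul, mul_one, hScard] at this
    exact this
  · push_neg at h
    obtain ⟨S, hPS, hSu, hScard⟩ := Finset.exists_subsuperset_card_eq (Finset.subset_univ P)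
      h.le (by rwa [card_univ, Fintype.card_fin])
    refine ⟨S, hScard, ?_⟩
    have hout : ∀ i ∈ univ \ S, c i ≤ a i := by
      intro i hi
      rcases Finset.mem_sdiff.mp hi with ⟨_, hiS⟩
      have : i ∉ P := fun hiP => hiS (hPS hiP)
      simp only [hP, mem_filter, mem_univ, true_and] at this
      omega
    have h1 : ∑ i ∈ univ \ S, c i ≤ ∑ i ∈ univ \ S, a i := Finset.sum_le_sum hout
    have h2 : ∑ i ∈ S, c i + ∑ i ∈ univ \ S, c i = r := by
      rw [add_comm, Finset.sum_sdiff (Finset.subset_univ S), hc]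
    have h3 : ∑ i ∈ S, a i + ∑ i ∈ univ \ S, a i = ∑ i, a i := by
      rw [add_comm, Finset.sum_sdiff (Finset.subset_univ S)]
    omega

/-- Swap lemma: if `B ≠ S`, `|S| = m`, `1 ≤ m < q`, `B` nonempty, there is an
`m`-set `T ≠ S` with `|S ∩ B| ≤ |T ∩ B|`. -/
lemma exists_swapT {q : ℕ} (m : ℕ) (hm : 1 ≤ m) (hmq : m < q) (S B : Finset (Fin q))
    (hS : S.card = m) (hBS : B ≠ S) :
    ∃ T : Finset (Fin q), T ≠ S ∧ T.card = m ∧ (S ∩ B).card ≤ (T ∩ B).card := by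
  by_cases hBsub : B ⊆ S
  · -- B ⊊ S : pick i ∈ S \ B, j ∉ S
    have hSB : ¬ S ⊆ B := fun h => hBS (Finset.Subset.antisymm hBsub h)
    obtain ⟨i, hiS, hiB⟩ := Finset.not_subset.mp hSB
    have hcompl : (Sᶜ : Finset (Fin q)).Nonempty := by
      rw [← Finset.card_pos, Finset.card_compl, hS, Fintype.card_fin]; omega
    obtain ⟨j, hj⟩ := hcompl
    have hjS : j ∉ S := Finset.mem_compl.mp hj
    refine ⟨insert j (S.erase i), ?_, ?_, ?_⟩
    · intro h; exact hjS (h ▸ Finset.mem_insert_self j _)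
    · rw [Finset.card_insert_of_notMem (fun h => hjS (Finset.erase_subset _ _ h)),
        Finset.card_erase_of_mem hiS, hS]; omega
    · apply Finset.card_le_card
      intro x hx
      rcases Finset.mem_inter.mp hx with ⟨hxS, hxB⟩
      exact Finset.mem_inter.mpr ⟨Finset.mem_insert_of_mem
        (Finset.mem_erase.mpr ⟨fun h => hiB (h ▸ hxB), hxS⟩), hxB⟩
  · obtain ⟨j, hjB, hjS⟩ := Finset.not_subset.mp hBsub
    by_cases hSB : S ⊆ B
    · -- S ⊆ B, j ∈ B \ S : swap any i ∈ S for j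
      obtain ⟨i, hiS⟩ := Finset.card_pos.mp (by omega : 0 < S.card)
      refine ⟨insert j (S.erase i), ?_, ?_, ?_⟩
      · intro h; exact hjS (h ▸ Finset.mem_insert_self j _)
      · rw [Finset.card_insert_of_notMem (fun h => hjS (Finset.erase_subset _ _ h)),
          Finset.card_erase_of_mem hiS, hS]; omega
      · have hsub2 : insert j (S.erase i) ∩ B = insert j (S.erase i) := by
          apply Finset.inter_eq_left.mpr
          intro x hx
          rcases Finset.mem_insert.mp hx with h | h
          · exact h ▸ hjB
          · exact hSB (Finset.erase_subset _ _ h)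
        rw [hsub2, Finset.card_insert_of_notMem (fun h => hjS (Finset.erase_subset _ _ h)),
          Finset.card_erase_of_mem hiS, hS]
        have := Finset.card_le_card (Finset.inter_subset_left : S ∩ B ⊆ S)
        rw [hS] at this; omega
    · -- pick i ∈ S \ B, j ∈ B \ S
      obtain ⟨i, hiS, hiB⟩ := Finset.not_subset.mp hSB
      refine ⟨insert j (S.erase i), ?_, ?_, ?_⟩
      · intro h; exact hjS (h ▸ Finset.mem_insert_self j _)
      · rw [Finset.card_insert_of_notMem (fun h => hjS (Finset.erase_subset _ _ h)),
          Finset.card_erase_of_mem hiS, hS]; omega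
      · apply Finset.card_le_card
        intro x hx
        rcases Finset.mem_inter.mp hx with ⟨hxS, hxB⟩
        exact Finset.mem_inter.mpr ⟨Finset.mem_insert_of_mem
          (Finset.mem_erase.mpr ⟨fun h => hiB (h ▸ hxB), hxS⟩), hxB⟩

lemma scarf_of_subset (q r : ℕ) (a : Fin q → ℕ)
    (h1 : r < q + ∑ i, a i) (h2 : ∑ i, a i < r)
    (τ : Finset (Fin q → ℕ)) (hne : τ.Nonempty) (hsub : τ ⊆ aUF q r a) :
    IsScarf q r τ := by
  have hs : ∑ i, a i ≤ r := h2.le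
  set m := r - ∑ i, a i with hmdef
  have hm1 : 1 ≤ m := by omega
  have hmq : m < q := by omega
  have hq2 : 2 ≤ q := by omega
  have hform : ∀ c ∈ τ, ∃ S, S.card = m ∧ c = a + ind S :=
    fun c hc => (mem_aUF_iff hs).mp (hsub hc)
  refine ⟨hne, fun c hc => (Finset.mem_filter.mp (hsub hc)).2, ?_⟩
  intro ρ hρne hρr hlab
  -- Step 1 : ρ ⊆ aUF
  have hρsub : ρ ⊆ aUF q r a := by
    intro c hc
    have hub : ∀ i, c i ≤ a i + 1 := by
      intro i
      have hA : ({i} : Finset (Fin q)).Nonempty := Finset.singleton_nonempty i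
      have hx : ∑ j ∈ {i}, c j ≤ eLabel ρ {i} := Finset.le_sup hc
      rw [hlab {i} hA] at hx
      have hy : eLabel τ {i} ≤ a i + 1 := by
        apply Finset.sup_le
        intro d hd
        obtain ⟨S, hS, rfl⟩ := hform d hd
        rw [sum_cS, Finset.sum_singleton]
        have : ({i} ∩ S).card ≤ 1 := by
          have := Finset.card_le_card (Finset.inter_subset_left : {i} ∩ S ⊆ {i})
          simpa using this
        omega
      rw [Finset.sum_singleton] at hx
      omega
    have hlb : ∀ i, a i ≤ c i := by
      intro i
      have hA : (univ.erase i).Nonempty := by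
        rw [← Finset.card_pos, Finset.card_erase_of_mem (mem_univ i), card_univ,
          Fintype.card_fin]
        omega
      have hx : ∑ j ∈ univ.erase i, c j ≤ eLabel τ (univ.erase i) := by
        rw [← hlab _ hA]; exact Finset.le_sup hc
      have hy : eLabel τ (univ.erase i) ≤ ∑ j ∈ univ.erase i, a j + m := by
        apply Finset.sup_le
        intro d hd
        obtain ⟨S, hS, rfl⟩ := hform d hd
        rw [sum_cS]
        have : (univ.erase i ∩ S).card ≤ m := by
          rw [← hS]
          exact Finset.card_le_card (Finset.inter_subset_right)
        omega
      have e1 : ∑ j ∈ univ.erase i, c j + c i = r := by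
        rw [Finset.sum_erase_add _ _ (mem_univ i)]; exact hρr c hc
      have e2 : ∑ j ∈ univ.erase i, a j + a i = ∑ j, a j :=
        Finset.sum_erase_add _ _ (mem_univ i)
      omega
    simp only [aUF, Finset.mem_filter, Finset.mem_Icc, Pi.le_def, Pi.add_apply, Pi.one_apply]
    exact ⟨⟨hlb, hub⟩, hρr c hc⟩
  -- card of intersections forces equality of the index sets
  have hkey : ∀ (S T : Finset (Fin q)), S.card = m → T.card = m →
      m ≤ (S ∩ T).card → T = S := by
    intro S T hS hT hi
    have h1' : S ∩ T = S := Finset.eq_of_subset_of_card_le Finset.inter_subset_left (by omega)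
    have h2' : S ∩ T = T := Finset.eq_of_subset_of_card_le Finset.inter_subset_right (by omega)
    rw [← h1', h2']
  apply Finset.Subset.antisymm
  · -- ρ ⊆ τ
    intro c hc
    obtain ⟨S, hS, rfl⟩ := (mem_aUF_iff hs).mp (hρsub hc)
    have hSne : S.Nonempty := Finset.card_pos.mp (by omega)
    have hle : ∑ i ∈ S, a i + m ≤ eLabel τ S := by
      rw [← hlab S hSne]
      refine le_trans ?_ (Finset.le_sup hc)
      rw [sum_cS, Finset.inter_self, hS]
    obtain ⟨d, hd, hde⟩ := Finset.exists_mem_eq_sup τ hne (fun d => ∑ i ∈ S, d i)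
    obtain ⟨T, hT, rfl⟩ := hform d hd
    have hTS : T = S := by
      apply hkey S T hS hT
      have hx : ∑ i ∈ S, a i + m ≤ ∑ i ∈ S, a i + (S ∩ T).card := by
        calc ∑ i ∈ S, a i + m ≤ eLabel τ S := hle
        _ = ∑ i ∈ S, (a + ind T) i := hde
        _ = ∑ i ∈ S, a i + (S ∩ T).card := sum_cS a T S
      clear hkey hform hlab hρsub hρr hsub hde
      omega
    rwa [← hTS]
  · -- τ ⊆ ρ
    intro c hc
    obtain ⟨S, hS, rfl⟩ := hform c hc
    have hSne : S.Nonempty := Finset.card_pos.mp (by omega)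
    have hle : ∑ i ∈ S, a i + m ≤ eLabel ρ S := by
      rw [hlab S hSne]
      refine le_trans ?_ (Finset.le_sup hc)
      rw [sum_cS, Finset.inter_self, hS]
    obtain ⟨d, hd, hde⟩ := Finset.exists_mem_eq_sup ρ hρne (fun d => ∑ i ∈ S, d i)
    obtain ⟨T, hT, rfl⟩ := (mem_aUF_iff hs).mp (hρsub hd)
    have hTS : T = S := by
      apply hkey S T hS hT
      have hx : ∑ i ∈ S, a i + m ≤ ∑ i ∈ S, a i + (S ∩ T).card := by
        calc ∑ i ∈ S, a i + m ≤ eLabel ρ S := hle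
        _ = ∑ i ∈ S, (a + ind T) i := hde
        _ = ∑ i ∈ S, a i + (S ∩ T).card := sum_cS a T S
      clear hkey hform hlab hρsub hρr hsub hde
      omega
    rwa [← hTS]

lemma scarf_max (q r : ℕ) (a : Fin q → ℕ)
    (h1 : r < q + ∑ i, a i) (h2 : ∑ i, a i < r)
    (σ : Finset (Fin q → ℕ)) (hσ : IsScarf q r σ) (hsub : aUF q r a ⊆ σ) :
    σ = aUF q r a := by
  have hs : ∑ i, a i ≤ r := h2.le
  set m := r - ∑ i, a i with hmdef
  have hm1 : 1 ≤ m := by omega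
  have hmq : m < q := by omega
  obtain ⟨hne, hsum, hmax⟩ := hσ
  refine Finset.Subset.antisymm ?_ hsub
  intro c hc
  by_contra hcn
  obtain ⟨S, hScard, hSle⟩ := exists_top q r a c (hsum c hc) hs (by omega)
  have hcSaU : a + ind S ∈ aUF q r a := (mem_aUF_iff hs).mpr ⟨S, hScard, rfl⟩
  have hcSmem : a + ind S ∈ σ := hsub hcSaU
  have hccS : c ≠ a + ind S := fun h => hcn (h ▸ hcSaU)
  have hcτ : c ∈ σ.erase (a + ind S) := Finset.mem_erase.mpr ⟨hccS, hc⟩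
  have hlabels : ∀ B : Finset (Fin q), B.Nonempty →
      eLabel (σ.erase (a + ind S)) B = eLabel σ B := by
    intro B hBne
    refine le_antisymm (Finset.sup_mono (Finset.erase_subset _ _)) ?_
    obtain ⟨d, hd, hde⟩ := Finset.exists_mem_eq_sup σ hne (fun d => ∑ i ∈ B, d i)
    by_cases hdc : d = a + ind S
    · subst hdc
      by_cases hBS : B = S
      · subst hBS
        -- use c itself
        have hcle : eLabel σ B ≤ ∑ i ∈ B, c i := by
          calc eLabel σ B = ∑ i ∈ B, (a + ind B) i := hde
          _ = ∑ i ∈ B, a i + (B ∩ B).card := sum_cS a B B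
          _ = ∑ i ∈ B, a i + (r - ∑ i, a i) := by rw [Finset.inter_self, hScard]
          _ ≤ ∑ i ∈ B, c i := hSle
        exact hcle.trans (Finset.le_sup hcτ)
      · obtain ⟨T, hTS, hTcard, hTint⟩ := exists_swapT m hm1 hmq S B hScard hBS
        have hTmem : a + ind T ∈ σ.erase (a + ind S) :=
          Finset.mem_erase.mpr ⟨fun h => hTS (ind_inj a h),
            hsub ((mem_aUF_iff hs).mpr ⟨T, by rw [hTcard, hmdef], rfl⟩)⟩
        have hcle : eLabel σ B ≤ ∑ i ∈ B, (a + ind T) i := by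
          calc eLabel σ B = ∑ i ∈ B, (a + ind S) i := hde
          _ = ∑ i ∈ B, a i + (B ∩ S).card := sum_cS a S B
          _ ≤ ∑ i ∈ B, a i + (B ∩ T).card := by
              rw [Finset.inter_comm B S, Finset.inter_comm B T]
              exact Nat.add_le_add_left hTint _
          _ = ∑ i ∈ B, (a + ind T) i := (sum_cS a T B).symm
        exact hcle.trans (Finset.le_sup hTmem)
    · have : eLabel σ B ≤ ∑ i ∈ B, d i := le_of_eq hde
      exact this.trans (Finset.le_sup (Finset.mem_erase.mpr ⟨hdc, hd⟩))
  have heq : σ.erase (a + ind S) = σ :=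
    hmax _ ⟨c, hcτ⟩ (fun d hd => hsum d (Finset.erase_subset _ _ hd)) hlabels
  have : a + ind S ∉ σ.erase (a + ind S) := Finset.notMem_erase _ _
  rw [heq] at this
  exact this hcSmem

/-- Theorem (t:f-vector): for `a ∈ ℕ^q` with `r - q < |a| < r` (written
`r < q + |a|` and `|a| < r`), the set `aU` is a facet of the Scarf complex of
`E_q^r`: it is a Scarf face, every Scarf face containing it equals it, and
every nonempty subset of it is again a Scarf face. -/
theorem stmt8 (q r : ℕ) (hq : 1 ≤ q) (hr : 1 ≤ r) (a : Fin q → ℕ)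
    (h1 : r < q + ∑ i, a i) (h2 : ∑ i, a i < r) :
    IsScarf q r (aUF q r a) ∧
    (∀ σ : Finset (Fin q → ℕ), IsScarf q r σ → aUF q r a ⊆ σ → σ = aUF q r a) ∧
    (∀ τ : Finset (Fin q → ℕ), τ.Nonempty → τ ⊆ aUF q r a → IsScarf q r τ) := by
  have hs : ∑ i, a i ≤ r := h2.le
  have hne : (aUF q r a).Nonempty := by
    obtain ⟨S, _, hScard⟩ := Finset.exists_subset_card_eq
      (show r - ∑ i, a i ≤ (univ : Finset (Fin q)).card by
        rw [card_univ, Fintype.card_fin]; omega)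
    exact ⟨a + ind S, (mem_aUF_iff hs).mpr ⟨S, hScard, rfl⟩⟩
  exact ⟨scarf_of_subset q r a h1 h2 _ hne Finset.Subset.rfl,
    fun σ hσ hsubσ => scarf_max q r a h1 h2 σ hσ hsubσ,
    fun τ hτne hτsub => scarf_of_subset q r a h1 h2 τ hτne hτsub⟩
end

section
/- Let a, b ∈ N^r_q. (1) If u ∈ Supp(a), k ∈ Supp(b), and Supp(a) = {u} or Supp(b) = {k}, then ε^{a − e_u + e_k} divides lcm(ε^a, ε^b); that is, ∑_{i∈A}(a − e_u + e_k)_i ≤ max(∑_{i∈A} a_i, ∑_{i∈A} b_i) for every nonempty A ⊆ [q]. (2) If Supp(a) = {u, v} and Supp(b) = {k, l} with u ≠ v and k ≠ l, then ε^{a − e_u − e_v + e_k + e_l} divides lcm(ε^a, ε^b); that is, ∑_{i∈A}(a − e_u − e_v + e_k + e_l)_i ≤ max(∑_{i∈A} a_i, ∑_{i∈A} b_i) for every nonempty A ⊆ [q]. -/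
open Finset

private lemma auxA {q : ℕ} (a : Fin q → ℕ) (A : Finset (Fin q)) :
    ∑ i ∈ A, a i ≤ ∑ i, a i :=
  Finset.sum_le_sum_of_subset (Finset.subset_univ A)

private lemma auxIns {q : ℕ} (a : Fin q → ℕ) {A : Finset (Fin q)} {u : Fin q}
    (hu : u ∉ A) : a u + ∑ i ∈ A, a i ≤ ∑ i, a i := by
  rw [← Finset.sum_insert hu]
  exact auxA a _

private lemma auxFull {q : ℕ} (a : Fin q → ℕ) {A : Finset (Fin q)}
    (h : ∀ i, i ∉ A → a i = 0) : ∑ i ∈ A, a i = ∑ i, a i :=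
  Finset.sum_subset (Finset.subset_univ A) (fun i _ hi => h i hi)

private lemma auxZero {q : ℕ} (a : Fin q → ℕ) {A : Finset (Fin q)}
    (h : ∀ i ∈ A, a i = 0) : ∑ i ∈ A, a i = 0 :=
  Finset.sum_eq_zero h

private lemma auxIte {q : ℕ} (A : Finset (Fin q)) (u : Fin q) :
    ∑ x ∈ A, (if x = u then 1 else 0) = if u ∈ A then 1 else 0 :=
  Finset.sum_ite_eq' A u (fun _ => 1)

/-- Lemma (l:some-divisibility): divisibility conditions II.
(1) If `u ∈ Supp a`, `k ∈ Supp b`, and `Supp a = {u}` or `Supp b = {k}`, then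
`ε^(a - e_u + e_k)` divides `lcm(ε^a, ε^b)`, i.e. for every nonempty `A`,
`∑_{i ∈ A} (a - e_u + e_k) i ≤ max (∑_{i ∈ A} a i) (∑_{i ∈ A} b i)`.
(2) If `Supp a = {u, v}` and `Supp b = {k, l}` with `u ≠ v`, `k ≠ l`, then
`ε^(a - e_u - e_v + e_k + e_l)` divides `lcm(ε^a, ε^b)`. -/
theorem stmt10 (q r : ℕ) (hq : 1 ≤ q) (hr : 1 ≤ r)
    (a b : Fin q → ℕ) (ha : ∑ i, a i = r) (hb : ∑ i, b i = r) :
    (∀ u k : Fin q, a u ≠ 0 → b k ≠ 0 →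
      ((∀ i, a i ≠ 0 → i = u) ∨ (∀ i, b i ≠ 0 → i = k)) →
      ∀ A : Finset (Fin q), A.Nonempty →
        ∑ i ∈ A, (a i - (if i = u then 1 else 0) + (if i = k then 1 else 0))
          ≤ max (∑ i ∈ A, a i) (∑ i ∈ A, b i)) ∧
    (∀ u v k l : Fin q, u ≠ v → k ≠ l →
      (∀ i, a i ≠ 0 ↔ (i = u ∨ i = v)) →
      (∀ i, b i ≠ 0 ↔ (i = k ∨ i = l)) →
      ∀ A : Finset (Fin q), A.Nonempty →
        ∑ i ∈ A, (a i - (if i = u then 1 else 0) - (if i = v then 1 else 0)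
            + (if i = k then 1 else 0) + (if i = l then 1 else 0))
          ≤ max (∑ i ∈ A, a i) (∑ i ∈ A, b i)) := by
  constructor
  · -- part (1)
    intro u k hau hbk hcase A hA
    have key : ∑ i ∈ A, (a i - (if i = u then 1 else 0) + (if i = k then 1 else 0))
        = ∑ i ∈ A, a i - (if u ∈ A then 1 else 0) + (if k ∈ A then 1 else 0) := by
      rw [Finset.sum_add_distrib, auxIte,
        Finset.sum_tsub_distrib A (fun i _ => by
          split <;> simp_all [Nat.one_le_iff_ne_zero]), auxIte]
    rw [key]
    have hAa : ∑ i ∈ A, a i ≤ r := ha ▸ auxA a A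
    by_cases huA : u ∈ A
    · have h1 : 1 ≤ ∑ i ∈ A, a i :=
        le_trans (Nat.one_le_iff_ne_zero.mpr hau) (Finset.single_le_sum (fun i _ => Nat.zero_le _) huA)
      have : ∑ i ∈ A, a i - (if u ∈ A then 1 else 0) + (if k ∈ A then 1 else 0)
          ≤ ∑ i ∈ A, a i := by simp [huA]; split <;> omega
      exact le_trans this (le_max_left _ _)
    · by_cases hkA : k ∈ A
      · simp only [if_neg huA, if_pos hkA, Nat.sub_zero]
        rcases hcase with hc | hc
        · -- a supported on {u}, u ∉ A
          have hz : ∑ i ∈ A, a i = 0 := auxZero a (fun i hi => by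
            by_contra h; exact huA ((hc i h) ▸ hi))
          have hbk' : 1 ≤ ∑ i ∈ A, b i :=
            le_trans (Nat.one_le_iff_ne_zero.mpr hbk)
              (Finset.single_le_sum (fun i _ => Nat.zero_le _) hkA)
          rw [hz]
          exact le_trans hbk' (le_max_right _ _)
        · -- b supported on {k}, k ∈ A
          have hBfull : ∑ i ∈ A, b i = r := by
            rw [auxFull b (fun i hi => by
              by_contra h; exact hi ((hc i h) ▸ hkA)), hb]
          have hins : a u + ∑ i ∈ A, a i ≤ r := ha ▸ auxIns a huA
          have : ∑ i ∈ A, a i + 1 ≤ r := by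
            have := Nat.one_le_iff_ne_zero.mpr hau; omega
          rw [hBfull]
          omega
      · simp only [if_neg huA, if_neg hkA, Nat.sub_zero, Nat.add_zero]
        exact le_max_left _ _
  · -- part (2)
    intro u v k l huv hkl hsa hsb A hA
    have hau : a u ≠ 0 := (hsa u).mpr (Or.inl rfl)
    have hav : a v ≠ 0 := (hsa v).mpr (Or.inr rfl)
    have hbk : b k ≠ 0 := (hsb k).mpr (Or.inl rfl)
    have hbl : b l ≠ 0 := (hsb l).mpr (Or.inr rfl)
    have hau1 : 1 ≤ a u := Nat.one_le_iff_ne_zero.mpr hau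
    have hav1 : 1 ≤ a v := Nat.one_le_iff_ne_zero.mpr hav
    have hbk1 : 1 ≤ b k := Nat.one_le_iff_ne_zero.mpr hbk
    have hbl1 : 1 ≤ b l := Nat.one_le_iff_ne_zero.mpr hbl
    have key : ∑ i ∈ A, (a i - (if i = u then 1 else 0) - (if i = v then 1 else 0)
            + (if i = k then 1 else 0) + (if i = l then 1 else 0))
        = ∑ i ∈ A, a i - (if u ∈ A then 1 else 0) - (if v ∈ A then 1 else 0)
            + (if k ∈ A then 1 else 0) + (if l ∈ A then 1 else 0) := by
      rw [Finset.sum_add_distrib, Finset.sum_add_distrib, auxIte, auxIte,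
        Finset.sum_tsub_distrib A (f := fun i => a i - (if i = u then 1 else 0))
          (g := fun i => if i = v then 1 else 0) (fun i _ => by
            show (if i = v then 1 else 0) ≤ a i - (if i = u then 1 else 0)
            split
            · next h => subst h; rw [if_neg (Ne.symm huv)]; omega
            · exact Nat.zero_le _),
        Finset.sum_tsub_distrib A (fun i _ => by
          show (if i = u then 1 else 0) ≤ a i
          split
          · next h => subst h; omega
          · exact Nat.zero_le _), auxIte, auxIte]
    rw [key]
    have hAa : ∑ i ∈ A, a i ≤ r := ha ▸ auxA a A
    have hAb : ∑ i ∈ A, b i ≤ r := hb ▸ auxA b A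
    have hpair : a u + a v ≤ r := by
      have h := auxA a {u, v}
      rw [Finset.sum_pair huv, ha] at h
      exact h
    have h1 : u ∈ A → v ∈ A → a u + a v ≤ ∑ i ∈ A, a i := fun hu hv => by
      have h := Finset.sum_le_sum_of_subset
        (Finset.insert_subset_iff.mpr ⟨hu, Finset.singleton_subset_iff.mpr hv⟩) (f := a)
      rwa [Finset.sum_pair huv] at h
    have h2 : u ∈ A → a u ≤ ∑ i ∈ A, a i := fun hu =>
      Finset.single_le_sum (fun i _ => Nat.zero_le _) hu
    have h3 : v ∈ A → a v ≤ ∑ i ∈ A, a i := fun hv =>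
      Finset.single_le_sum (fun i _ => Nat.zero_le _) hv
    have h4 : u ∉ A → a u + ∑ i ∈ A, a i ≤ r := fun hu => ha ▸ auxIns a hu
    have h5 : v ∉ A → a v + ∑ i ∈ A, a i ≤ r := fun hv => ha ▸ auxIns a hv
    have h6 : u ∉ A → v ∉ A → ∑ i ∈ A, a i = 0 := fun hu hv =>
      auxZero a (fun i hi => by
        by_contra h
        rcases (hsa i).mp h with rfl | rfl
        · exact hu hi
        · exact hv hi)
    have h7 : k ∈ A → b k ≤ ∑ i ∈ A, b i := fun hk =>
      Finset.single_le_sum (fun i _ => Nat.zero_le _) hk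
    have h8 : l ∈ A → b l ≤ ∑ i ∈ A, b i := fun hl =>
      Finset.single_le_sum (fun i _ => Nat.zero_le _) hl
    have h9 : k ∈ A → l ∈ A → ∑ i ∈ A, b i = r := fun hk hl => by
      rw [auxFull b (fun i hi => by
        by_contra h
        rcases (hsb i).mp h with rfl | rfl
        · exact hi hk
        · exact hi hl), hb]
    by_cases huA : u ∈ A <;> by_cases hvA : v ∈ A <;>
      by_cases hkA : k ∈ A <;> by_cases hlA : l ∈ A <;>
      simp only [huA, hvA, hkA, hlA, if_true, if_false, ite_true, ite_false,
        eq_self_iff_true, true_implies, false_implies, not_false_iff,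
        forall_true_left] at h1 h2 h3 h4 h5 h6 h7 h8 h9 ⊢ <;>
      omega
end

section
/- Let a, b, c ∈ N^r_q. If lcm(ε^a, ε^b) = lcm(ε^a, ε^c), i.e., max(∑_{i∈A} a_i, ∑_{i∈A} b_i) = max(∑_{i∈A} a_i, ∑_{i∈A} c_i) for every nonempty A ⊆ [q], then b = c. -/
open Finset

/-- Proposition (p:edges): if `a, b, c ∈ N^r_q` and
`lcm(ε^a, ε^b) = lcm(ε^a, ε^c)` (i.e. the exponents of every variable `x_A`,
`A` nonempty, agree), then `b = c`. -/
theorem stmt11 (q r : ℕ) (hq : 1 ≤ q) (hr : 1 ≤ r)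
    (a b c : Fin q → ℕ)
    (ha : ∑ i, a i = r) (hb : ∑ i, b i = r) (hc : ∑ i, c i = r)
    (h : ∀ A : Finset (Fin q), A.Nonempty →
      max (∑ i ∈ A, a i) (∑ i ∈ A, b i) = max (∑ i ∈ A, a i) (∑ i ∈ A, c i)) :
    b = c := by
  by_contra hne
  obtain ⟨j, hj⟩ : ∃ j, b j ≠ c j := by
    by_contra h'; push_neg at h'; exact hne (funext h')
  set T : Finset (Fin q) := univ.filter (fun i => b i < c i) with hTdef
  set S : Finset (Fin q) := univ.filter (fun i => c i < b i) with hSdef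
  have hbc : ∑ i, b i = ∑ i, c i := by rw [hb, hc]
  have hTne : T.Nonempty := by
    by_contra hT
    rw [not_nonempty_iff_eq_empty, filter_eq_empty_iff] at hT
    have hlt : ∑ i, c i < ∑ i, b i := by
      apply Finset.sum_lt_sum
      · intro i _; exact not_lt.mp (hT (mem_univ i))
      · exact ⟨j, mem_univ j, lt_of_le_of_ne (not_lt.mp (hT (mem_univ j))) (Ne.symm hj)⟩
    omega
  have hSne : S.Nonempty := by
    by_contra hS
    rw [not_nonempty_iff_eq_empty, filter_eq_empty_iff] at hS
    have hlt : ∑ i, b i < ∑ i, c i := by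
      apply Finset.sum_lt_sum
      · intro i _; exact not_lt.mp (hS (mem_univ i))
      · exact ⟨j, mem_univ j, lt_of_le_of_ne (not_lt.mp (hS (mem_univ j))) hj⟩
    omega
  have hSsub : S ⊆ Tᶜ := by
    intro i hi
    simp only [hSdef, mem_filter] at hi
    simp only [hTdef, mem_compl, mem_filter, mem_univ, true_and]
    omega
  have hTcne : Tᶜ.Nonempty := hSne.mono hSsub
  -- b(T) < c(T)
  have h1 : ∑ i ∈ T, b i < ∑ i ∈ T, c i := by
    obtain ⟨i0, hi0⟩ := hTne
    apply Finset.sum_lt_sum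
    · intro i hi; simp only [hTdef, mem_filter] at hi; omega
    · refine ⟨i0, hi0, ?_⟩
      simp only [hTdef, mem_filter] at hi0; omega
  -- c(Tᶜ) < b(Tᶜ)
  have h2 : ∑ i ∈ Tᶜ, c i < ∑ i ∈ Tᶜ, b i := by
    obtain ⟨i0, hi0⟩ := hSne
    apply Finset.sum_lt_sum
    · intro i hi; simp only [hTdef, mem_compl, mem_filter, mem_univ, true_and] at hi; omega
    · refine ⟨i0, hSsub hi0, ?_⟩
      simp only [hSdef, mem_filter] at hi0; omega
  have hA1 := h T hTne
  have hA2 := h Tᶜ hTcne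
  have hs1 : ∑ i ∈ T, a i + ∑ i ∈ Tᶜ, a i = r := by
    rw [Finset.sum_add_sum_compl]; exact ha
  have hs2 : ∑ i ∈ T, b i + ∑ i ∈ Tᶜ, b i = r := by
    rw [Finset.sum_add_sum_compl]; exact hb
  have hs3 : ∑ i ∈ T, c i + ∑ i ∈ Tᶜ, c i = r := by
    rw [Finset.sum_add_sum_compl]; exact hc
  omega
end

section
/- Let a, b ∈ N^r_q satisfy: |Supp(a) ∪ Supp(b)| ≤ 4, a > b in the lexicographic order, and |a_s − b_s| > 1 for some s ∈ [q]. Then there exists c ∈ N^r_q such that: (1) c ≠ b and a > c in the lexicographic order; (2) the two-element set {a, c} is a Scarf face of E_q^r; and (3) ∑_{i∈A} c_i ≤ max(∑_{i∈A} a_i, ∑_{i∈A} b_i) for every nonempty A ⊆ [q] (i.e., ε^c divides lcm(ε^a, ε^b)). In particular, {a, b} is not a Scarf face of E_q^r. -/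
open Finset

/-- The lexicographic order on `ℕ^q`: `a > b` iff there is `i` with
`a j = b j` for all `j < i` and `a i > b i`. -/
def lexGT {q : ℕ} (a b : Fin q → ℕ) : Prop :=
  ∃ i : Fin q, (∀ j : Fin q, j < i → a j = b j) ∧ b i < a i

lemma sum_ind {q : ℕ} (A V : Finset (Fin q)) :
    ∑ i ∈ A, (if i ∈ V then (1:ℕ) else 0) = (A ∩ V).card := by
  simp [Finset.sum_ite_mem]

lemma forced_eq {q : ℕ} {W : Finset (Fin q)} {m z x : Fin q → ℕ}
    (hx : ∀ i, x i + (if i ∈ W then 1 else 0) = m i)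
    (hzm : ∀ i, z i ≤ m i)
    (heq : (univ.filter fun i => z i < m i) = W)
    (hw : ∑ i, (m i - z i) = W.card) :
    z = x := by
  have hout : ∀ i, i ∉ W → z i = m i := by
    intro i hi
    have h1 : i ∉ univ.filter fun i => z i < m i := heq ▸ hi
    simp only [mem_filter, mem_univ, true_and] at h1
    have := hzm i; omega
  have hin : ∀ i ∈ W, z i < m i := by
    intro i hi
    have h1 : i ∈ univ.filter fun i => z i < m i := heq ▸ hi
    simpa using h1
  have hsW : ∑ i ∈ W, (m i - z i) = W.card := by
    rw [← hw]
    apply Finset.sum_subset (subset_univ W)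
    intro i _ hi
    have := hout i hi; omega
  have hone : ∀ i ∈ W, m i - z i = 1 := by
    have h2 : ∑ i ∈ W, (m i - z i) = ∑ i ∈ W, ((m i - z i - 1) + 1) := by
      apply Finset.sum_congr rfl
      intro i hi; have := hin i hi; omega
    rw [Finset.sum_add_distrib, Finset.sum_const, smul_eq_mul, mul_one] at h2
    have h1 : ∑ i ∈ W, (m i - z i - 1) = 0 := by omega
    intro i hi
    have h3 := (Finset.sum_eq_zero_iff).mp h1 i hi
    have h4 := hin i hi
    omega
  funext i
  by_cases hi : i ∈ W
  · have h1 := hone i hi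
    have h2 := hx i
    have h3 := hzm i
    simp only [hi, if_pos] at h2
    omega
  · have h1 := hout i hi
    have h2 := hx i
    simp only [hi, if_neg, not_false_iff] at h2
    omega

lemma scarf_pair {q : ℕ} {U V : Finset (Fin q)} {k r : ℕ} (hk : 1 ≤ k)
    (hUV : Disjoint U V) (hU : U.card = k) (hV : V.card = k)
    {m a c : Fin q → ℕ}
    (ham : ∀ i, a i + (if i ∈ V then 1 else 0) = m i)
    (hcm : ∀ i, c i + (if i ∈ U then 1 else 0) = m i)
    (hmr : ∑ i, m i = r + k) :
    IsScarf q r {a, c} := by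
  have hsumA : ∀ A : Finset (Fin q), ∑ i ∈ A, a i + (A ∩ V).card = ∑ i ∈ A, m i := by
    intro A
    rw [← sum_ind A V, ← Finset.sum_add_distrib]
    exact Finset.sum_congr rfl fun i _ => ham i
  have hsumC : ∀ A : Finset (Fin q), ∑ i ∈ A, c i + (A ∩ U).card = ∑ i ∈ A, m i := by
    intro A
    rw [← sum_ind A U, ← Finset.sum_add_distrib]
    exact Finset.sum_congr rfl fun i _ => hcm i
  have hAa : ∑ i, a i = r := by
    have h1 := hsumA univ; rw [univ_inter, hV] at h1; omega
  have hAc : ∑ i, c i = r := by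
    have h1 := hsumC univ; rw [univ_inter, hU] at h1; omega
  have hlab : ∀ A : Finset (Fin q),
      eLabel {a, c} A = max (∑ i ∈ A, a i) (∑ i ∈ A, c i) := by
    intro A
    simp [eLabel, Finset.sup_insert, Finset.sup_singleton]
  have hUne : U.Nonempty := by rw [← card_pos, hU]; omega
  have hVne : V.Nonempty := by rw [← card_pos, hV]; omega
  refine ⟨insert_nonempty _ _, ?_, ?_⟩
  · intro x hx
    rcases mem_insert.mp hx with h | h
    · subst h; exact hAa
    · rw [mem_singleton] at h; subst h; exact hAc
  intro τ hτne hτsum hτlab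
  have hzm : ∀ z ∈ τ, ∀ i, z i ≤ m i := by
    intro z hz i
    have h1 : ∑ j ∈ ({i} : Finset (Fin q)), z j ≤ eLabel τ {i} := Finset.le_sup hz
    rw [hτlab _ (singleton_nonempty i), hlab] at h1
    simp only [Finset.sum_singleton] at h1
    have h2 : a i ≤ m i := Nat.le.intro (ham i)
    have h3 : c i ≤ m i := Nat.le.intro (hcm i)
    rcases le_max_iff.mp h1 with h | h <;> omega
  have hzac : ∀ z ∈ τ, z = a ∨ z = c := by
    intro z hz
    have hzsum := hτsum z hz
    have hw : ∑ i, (m i - z i) = k := by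
      have h1 : ∑ i, (m i - z i) + ∑ i, z i = ∑ i, m i := by
        rw [← Finset.sum_add_distrib]
        exact Finset.sum_congr rfl fun i _ => by have := hzm z hz i; omega
      omega
    set S := univ.filter (fun i => z i < m i) with hS
    have hScard : S.card ≤ k := by
      have h1 : S.card ≤ ∑ i ∈ S, (m i - z i) := by
        rw [card_eq_sum_ones]
        refine Finset.sum_le_sum fun i hi => ?_
        rw [hS, mem_filter] at hi; omega
      have h2 : ∑ i ∈ S, (m i - z i) ≤ ∑ i, (m i - z i) :=
        Finset.sum_le_sum_of_subset (subset_univ S)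
      omega
    have hAne : ((U ∪ V) \ S).Nonempty := by
      rw [← Finset.card_pos]
      have h1 : (U ∪ V).card = k + k := by
        rw [Finset.card_union_of_disjoint hUV]; omega
      have h2 : (U ∪ V).card ≤ ((U ∪ V) \ S).card + S.card :=
        Finset.card_le_card_sdiff_add_card
      omega
    have hzA : ∀ i ∈ (U ∪ V) \ S, z i = m i := by
      intro i hi
      rw [mem_sdiff] at hi
      have h2 : ¬ z i < m i := by
        intro h; exact hi.2 (by rw [hS, mem_filter]; exact ⟨mem_univ i, h⟩)
      have := hzm z hz i; omega
    have h2 : ∑ i ∈ (U ∪ V) \ S, z i ≤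
        max (∑ i ∈ (U ∪ V) \ S, a i) (∑ i ∈ (U ∪ V) \ S, c i) := by
      rw [← hlab, ← hτlab _ hAne]; exact Finset.le_sup hz
    have h3 : ∑ i ∈ (U ∪ V) \ S, z i = ∑ i ∈ (U ∪ V) \ S, m i :=
      Finset.sum_congr rfl hzA
    have h4 := hsumA ((U ∪ V) \ S)
    have h5 := hsumC ((U ∪ V) \ S)
    have hcase : (((U ∪ V) \ S) ∩ V).card = 0 ∨ (((U ∪ V) \ S) ∩ U).card = 0 := by
      rcases le_max_iff.mp (h3 ▸ h2) with h | h
      · left; omega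
      · right; omega
    rcases hcase with h | h
    · left
      have hVS : V ⊆ S := by
        intro v hv
        by_contra hvS
        have hvA : v ∈ ((U ∪ V) \ S) ∩ V := by
          rw [mem_inter, mem_sdiff]; exact ⟨⟨mem_union_right _ hv, hvS⟩, hv⟩
        rw [Finset.card_eq_zero] at h
        rw [h] at hvA; exact absurd hvA (notMem_empty v)
      have hSV : (univ.filter fun i => z i < m i) = V := by
        rw [← hS]
        exact (Finset.eq_of_subset_of_card_le hVS (by omega)).symm
      exact forced_eq ham (hzm z hz) hSV (by rw [hV]; exact hw)
    · right
      have hUS : U ⊆ S := by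
        intro u hu
        by_contra huS
        have huA : u ∈ ((U ∪ V) \ S) ∩ U := by
          rw [mem_inter, mem_sdiff]; exact ⟨⟨mem_union_left _ hu, huS⟩, hu⟩
        rw [Finset.card_eq_zero] at h
        rw [h] at huA; exact absurd huA (notMem_empty u)
      have hSU : (univ.filter fun i => z i < m i) = U := by
        rw [← hS]
        exact (Finset.eq_of_subset_of_card_le hUS (by omega)).symm
      exact forced_eq hcm (hzm z hz) hSU (by rw [hU]; exact hw)
  have hτsub : τ ⊆ {a, c} := by
    intro z hz; rcases hzac z hz with h | h <;> simp [h]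
  have hUV0 : (U ∩ V).card = 0 := by
    rw [Finset.card_eq_zero, ← Finset.disjoint_iff_inter_eq_empty]; exact hUV
  have hVU0 : (V ∩ U).card = 0 := by
    rw [Finset.card_eq_zero, ← Finset.disjoint_iff_inter_eq_empty]; exact hUV.symm
  have hkmU : k ≤ ∑ i ∈ U, m i := by
    calc k = U.card := hU.symm
    _ = ∑ _i ∈ U, 1 := (card_eq_sum_ones U)
    _ ≤ ∑ i ∈ U, m i := Finset.sum_le_sum fun i hi => by
        have h1 := hcm i; rw [if_pos hi] at h1; omega
  have hkmV : k ≤ ∑ i ∈ V, m i := by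
    calc k = V.card := hV.symm
    _ = ∑ _i ∈ V, 1 := (card_eq_sum_ones V)
    _ ≤ ∑ i ∈ V, m i := Finset.sum_le_sum fun i hi => by
        have h1 := ham i; rw [if_pos hi] at h1; omega
  have haτ : a ∈ τ := by
    by_contra hna
    have hτc : τ ⊆ {c} := by
      intro z hz
      rcases hzac z hz with h | h
      · exact absurd (h ▸ hz) hna
      · simp [h]
    obtain ⟨z, hz⟩ := hτne
    have hzc : z = c := by have := hτc hz; simpa using this
    have hτeq : τ = {c} := Finset.Subset.antisymm hτc
      (by intro x hx; rw [mem_singleton] at hx; subst hx; exact hzc ▸ hz)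
    have h1 := hτlab U hUne
    rw [hτeq, hlab] at h1
    simp only [eLabel, Finset.sup_singleton] at h1
    have h4 := hsumA U
    have h5 := hsumC U
    rw [hUV0] at h4
    rw [inter_self, hU] at h5
    have h6 : max (∑ i ∈ U, a i) (∑ i ∈ U, c i) = ∑ i ∈ U, a i :=
      max_eq_left (by omega)
    omega
  have hcτ : c ∈ τ := by
    by_contra hnc
    have hτa : τ ⊆ {a} := by
      intro z hz
      rcases hzac z hz with h | h
      · simp [h]
      · exact absurd (h ▸ hz) hnc
    obtain ⟨z, hz⟩ := hτne
    have hza : z = a := by have := hτa hz; simpa using this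
    have hτeq : τ = {a} := Finset.Subset.antisymm hτa
      (by intro x hx; rw [mem_singleton] at hx; subst hx; exact hza ▸ hz)
    have h1 := hτlab V hVne
    rw [hτeq, hlab] at h1
    simp only [eLabel, Finset.sup_singleton] at h1
    have h4 := hsumA V
    have h5 := hsumC V
    rw [inter_self, hV] at h4
    rw [hVU0] at h5
    have h6 : max (∑ i ∈ V, a i) (∑ i ∈ V, c i) = ∑ i ∈ V, c i :=
      max_eq_right (by omega)
    omega
  apply Finset.Subset.antisymm hτsub
  intro x hx
  rcases mem_insert.mp hx with h | h
  · exact h ▸ haτ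
  · rw [mem_singleton] at h; exact h ▸ hcτ

lemma main_aux {q r : ℕ} {a b : Fin q → ℕ} (ha : ∑ i, a i = r) (hb : ∑ i, b i = r)
    {i0 : Fin q} (hbef : ∀ j, j < i0 → a j = b j) (hi0 : b i0 < a i0)
    (U V : Finset (Fin q)) (k : ℕ) (hk : 1 ≤ k)
    (hUcard : U.card = k) (hVcard : V.card = k)
    (hUsub : ∀ i ∈ U, b i < a i) (hVsub : ∀ i ∈ V, a i < b i)
    (hi0U : i0 ∈ U)
    (hdiv : ∀ A : Finset (Fin q),
      ((A ∩ V).card : ℤ) ≤ (A ∩ U).card + max 0 (∑ i ∈ A, ((b i : ℤ) - a i)))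
    (hs : ∃ s : Fin q, a s + 1 < b s ∨ b s + 1 < a s) :
    ∃ c : Fin q → ℕ, (∑ i, c i = r) ∧ c ≠ b ∧ lexGT a c ∧ IsScarf q r {a, c} ∧
      (∀ A : Finset (Fin q), A.Nonempty →
        ∑ i ∈ A, c i ≤ max (∑ i ∈ A, a i) (∑ i ∈ A, b i)) := by
  have hUV : Disjoint U V := by
    rw [Finset.disjoint_left]; intro i hiU hiV
    have h1 := hUsub i hiU
    have h2 := hVsub i hiV
    omega
  set m : Fin q → ℕ := fun i => a i + (if i ∈ V then 1 else 0) with hm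
  set c : Fin q → ℕ := fun i => m i - (if i ∈ U then 1 else 0) with hc
  have haU : ∀ i ∈ U, 1 ≤ a i := fun i hi => by have := hUsub i hi; omega
  have ham : ∀ i, a i + (if i ∈ V then 1 else 0) = m i := fun i => rfl
  have hcm : ∀ i, c i + (if i ∈ U then 1 else 0) = m i := by
    intro i
    have h3 : a i ≤ m i := Nat.le.intro (ham i)
    by_cases hi : i ∈ U
    · have h2 := haU i hi
      simp only [hc]
      rw [if_pos hi]
      omega
    · simp only [hc]
      rw [if_neg hi]
      omega
  have hmr : ∑ i, m i = r + k := by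
    have h1 : ∑ i, m i = ∑ i, a i + ∑ i, (if i ∈ V then (1:ℕ) else 0) := by
      rw [← Finset.sum_add_distrib]
    rw [h1, sum_ind, univ_inter, hVcard, ha]
  have hscarf := scarf_pair hk hUV hUcard hVcard ham hcm hmr
  have hkey : ∀ A : Finset (Fin q),
      ∑ i ∈ A, c i + (A ∩ U).card = ∑ i ∈ A, a i + (A ∩ V).card := by
    intro A
    have h1 : ∑ i ∈ A, c i + (A ∩ U).card = ∑ i ∈ A, m i := by
      rw [← sum_ind A U, ← Finset.sum_add_distrib]
      exact Finset.sum_congr rfl fun i _ => hcm i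
    have h2 : ∑ i ∈ A, a i + (A ∩ V).card = ∑ i ∈ A, m i := by
      rw [← sum_ind A V, ← Finset.sum_add_distrib]
    omega
  refine ⟨c, hscarf.2.1 c (by simp), ?_, ?_, hscarf, ?_⟩
  · -- c ≠ b
    obtain ⟨s, hs⟩ := hs
    intro hcb
    have hcs : c s = b s := by rw [hcb]
    rcases hs with h | h
    · have hsU : s ∉ U := fun hsU => by have := hUsub s hsU; omega
      have h2 := hcm s
      rw [if_neg hsU] at h2
      have h3 := ham s
      have h4 : m s ≤ a s + 1 := by rw [← h3]; split <;> omega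
      omega
    · have hsV : s ∉ V := fun hsV => by have := hVsub s hsV; omega
      have h1 := ham s
      rw [if_neg hsV] at h1
      have h2 := hcm s
      have h3 : m s ≤ c s + 1 := by rw [← h2]; split <;> omega
      omega
  · -- lexGT a c
    refine ⟨i0, ?_, ?_⟩
    · intro j hj
      have hab' := hbef j hj
      have hjU : j ∉ U := fun hjU => by have := hUsub j hjU; omega
      have hjV : j ∉ V := fun hjV => by have := hVsub j hjV; omega
      have h1 := ham j; rw [if_neg hjV] at h1
      have h2 := hcm j; rw [if_neg hjU] at h2
      omega
    · have hi0V : i0 ∉ V := Finset.disjoint_left.mp hUV hi0U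
      have h1 := ham i0; rw [if_neg hi0V] at h1
      have h2 := hcm i0; rw [if_pos hi0U] at h2
      have := haU i0 hi0U
      omega
  · -- divisibility
    intro A _
    have h1 := hkey A
    have h3 := hdiv A
    have h4 : ∑ i ∈ A, ((b i : ℤ) - a i) =
        (∑ i ∈ A, b i : ℕ) - ((∑ i ∈ A, a i : ℕ) : ℤ) := by
      push_cast [Finset.sum_sub_distrib]
      ring
    rcases le_total (∑ i ∈ A, b i) (∑ i ∈ A, a i) with h | h
    · rw [max_eq_left h]
      have h5 : max (0:ℤ) (∑ i ∈ A, ((b i : ℤ) - a i)) = 0 := by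
        rw [max_eq_left]
        rw [h4]
        have : ((∑ i ∈ A, b i : ℕ) : ℤ) ≤ ((∑ i ∈ A, a i : ℕ) : ℤ) := by exact_mod_cast h
        omega
      rw [h5, add_zero] at h3
      have h6 : (A ∩ V).card ≤ (A ∩ U).card := by exact_mod_cast h3
      omega
    · rw [max_eq_right h]
      have h5 : max (0:ℤ) (∑ i ∈ A, ((b i : ℤ) - a i)) =
          ((∑ i ∈ A, b i : ℕ) : ℤ) - ((∑ i ∈ A, a i : ℕ) : ℤ) := by
        rw [h4, max_eq_right]
        have : ((∑ i ∈ A, a i : ℕ) : ℤ) ≤ ((∑ i ∈ A, b i : ℕ) : ℤ) := by exact_mod_cast h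
        omega
      rw [h5] at h3
      have h6 : ((A ∩ V).card : ℤ) + (∑ i ∈ A, a i : ℕ) ≤
          ((A ∩ U).card : ℤ) + (∑ i ∈ A, b i : ℕ) := by omega
      have h7 : (A ∩ V).card + ∑ i ∈ A, a i ≤ (A ∩ U).card + ∑ i ∈ A, b i := by
        exact_mod_cast h6
      omega

/-- Lemma (l:find-c): if `a, b ∈ N^r_q` satisfy `|Supp a ∪ Supp b| ≤ 4`,
`a > b` lexicographically, and `|a s - b s| > 1` for some `s`, then there is
`c ∈ N^r_q` with `c ≠ b`, `a > c`, `{a, c}` a Scarf face of `E_q^r`, and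
`ε^c ∣ lcm(ε^a, ε^b)`.  In particular `{a, b}` is not a Scarf face. -/
theorem stmt12 (q r : ℕ) (hq : 1 ≤ q) (hr : 1 ≤ r)
    (a b : Fin q → ℕ) (ha : ∑ i, a i = r) (hb : ∑ i, b i = r)
    (hsupp : ((Finset.univ.filter fun i => a i ≠ 0) ∪
              (Finset.univ.filter fun i => b i ≠ 0)).card ≤ 4)
    (hab : lexGT a b)
    (hs : ∃ s : Fin q, a s + 1 < b s ∨ b s + 1 < a s) :
    (∃ c : Fin q → ℕ, (∑ i, c i = r) ∧ c ≠ b ∧ lexGT a c ∧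
      IsScarf q r {a, c} ∧
      (∀ A : Finset (Fin q), A.Nonempty →
        ∑ i ∈ A, c i ≤ max (∑ i ∈ A, a i) (∑ i ∈ A, b i))) ∧
    ¬ IsScarf q r {a, b} := by
  classical
  obtain ⟨i0, hbef, hi0⟩ := hab
  set P : Finset (Fin q) := univ.filter (fun i => a i < b i) with hPdef
  set Nn : Finset (Fin q) := univ.filter (fun i => b i < a i) with hNdef
  have hiP : ∀ i ∈ P, a i < b i := fun i hi => (mem_filter.mp hi).2
  have hiN : ∀ i ∈ Nn, b i < a i := fun i hi => (mem_filter.mp hi).2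
  have hmemP : ∀ i, a i < b i → i ∈ P := fun i h => mem_filter.mpr ⟨mem_univ i, h⟩
  have hmemN : ∀ i, b i < a i → i ∈ Nn := fun i h => mem_filter.mpr ⟨mem_univ i, h⟩
  have hi0N : i0 ∈ Nn := hmemN i0 hi0
  have hPN : Disjoint P Nn := by
    rw [disjoint_left]; intro i h1 h2
    have := hiP i h1; have := hiN i h2; omega
  have hPne : P.Nonempty := by
    by_contra h
    rw [not_nonempty_iff_eq_empty] at h
    have hle : ∀ i ∈ (univ : Finset (Fin q)), b i ≤ a i := by
      intro i _
      by_contra h2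
      have h3 : i ∈ P := hmemP i (by omega)
      rw [h] at h3; exact absurd h3 (notMem_empty i)
    have h4 : ∑ i, b i < ∑ i, a i :=
      Finset.sum_lt_sum hle ⟨i0, mem_univ i0, hi0⟩
    omega
  have hPN4 : P.card + Nn.card ≤ 4 := by
    have hsub : P ∪ Nn ⊆ (univ.filter fun i => a i ≠ 0) ∪ (univ.filter fun i => b i ≠ 0) := by
      intro i hi
      rcases mem_union.mp hi with h | h
      · exact mem_union_right _ (mem_filter.mpr ⟨mem_univ i, by have := hiP i h; omega⟩)
      · exact mem_union_left _ (mem_filter.mpr ⟨mem_univ i, by have := hiN i h; omega⟩)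
    calc P.card + Nn.card = (P ∪ Nn).card := (card_union_of_disjoint hPN).symm
    _ ≤ _ := card_le_card hsub
    _ ≤ 4 := hsupp
  set g : Fin q → ℤ := fun i => (b i : ℤ) - a i with hg
  have hgP : ∀ i ∈ P, 1 ≤ g i := by
    intro i hi; have := hiP i hi; simp only [hg]; omega
  have hgN : ∀ i ∈ Nn, g i ≤ -1 := by
    intro i hi; have := hiN i hi; simp only [hg]; omega
  have hg0 : ∀ i, i ∉ P → i ∉ Nn → g i = 0 := by
    intro i h1 h2
    have h3 : ¬ a i < b i := fun h => h1 (hmemP i h)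
    have h4 : ¬ b i < a i := fun h => h2 (hmemN i h)
    simp only [hg]; omega
  have hsplit : ∀ A : Finset (Fin q),
      ∑ i ∈ A, g i = ∑ i ∈ A ∩ P, g i + ∑ i ∈ A ∩ Nn, g i := by
    intro A
    have hd : Disjoint (A ∩ P) (A ∩ Nn) :=
      Finset.disjoint_of_subset_left inter_subset_right
        (Finset.disjoint_of_subset_right inter_subset_right hPN)
    rw [← Finset.sum_union hd]
    apply (Finset.sum_subset ?_ ?_).symm
    · rw [← Finset.inter_union_distrib_left]
      exact inter_subset_left
    · intro i hiA hni
      rw [← Finset.inter_union_distrib_left, mem_inter, mem_union] at hni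
      push_neg at hni
      have h := hni hiA
      exact hg0 i h.1 h.2
  have htot : ∑ i ∈ P, g i + ∑ i ∈ Nn, g i = 0 := by
    have h1 := hsplit univ
    rw [univ_inter, univ_inter] at h1
    have h2 : ∑ i, g i = 0 := by
      simp only [hg, Finset.sum_sub_distrib]
      have hA : ((∑ i, a i : ℕ) : ℤ) = ((∑ i, b i : ℕ) : ℤ) := by rw [ha, hb]
      push_cast at hA
      omega
    omega
  have hgeP : ∀ B : Finset (Fin q), B ⊆ P → (B.card : ℤ) ≤ ∑ i ∈ B, g i := by
    intro B hB
    calc (B.card : ℤ) = ∑ _i ∈ B, 1 := by simp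
    _ ≤ ∑ i ∈ B, g i := Finset.sum_le_sum fun i hi => hgP i (hB hi)
  have hleN : ∀ B : Finset (Fin q), B ⊆ Nn → ∑ i ∈ B, g i ≤ -(B.card : ℤ) := by
    intro B hB
    calc ∑ i ∈ B, g i ≤ ∑ _i ∈ B, (-1 : ℤ) :=
      Finset.sum_le_sum fun i hi => hgN i (hB hi)
    _ = -(B.card : ℤ) := by simp
  have key : ∃ c : Fin q → ℕ, (∑ i, c i = r) ∧ c ≠ b ∧ lexGT a c ∧
      IsScarf q r {a, c} ∧
      (∀ A : Finset (Fin q), A.Nonempty →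
        ∑ i ∈ A, c i ≤ max (∑ i ∈ A, a i) (∑ i ∈ A, b i)) := by
    by_cases hP1 : P.card = 1
    · -- Case A: U = {i0}, V = P
      refine main_aux ha hb hbef hi0 {i0} P 1 le_rfl (by simp) hP1
        (fun i hi => by rw [mem_singleton] at hi; subst hi; exact hi0) hiP
        (mem_singleton_self i0) ?_ hs
      intro A
      have hmax0 : (0:ℤ) ≤ max 0 (∑ i ∈ A, ((b i : ℤ) - a i)) := le_max_left 0 _
      have hgA : ∑ i ∈ A, ((b i : ℤ) - a i) = ∑ i ∈ A, g i := rfl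
      by_cases hPA : (A ∩ P).card = 0
      · rw [hPA]; push_cast; omega
      by_cases hi0A : i0 ∈ A
      · have h1 : A ∩ {i0} = {i0} := by
          rw [Finset.inter_singleton_of_mem hi0A]
        have h2 : (A ∩ P).card ≤ 1 :=
          le_trans (card_le_card inter_subset_right) (le_of_eq hP1)
        rw [h1, card_singleton]
        push_cast
        omega
      · have hAP : A ∩ P = P :=
          Finset.eq_of_subset_of_card_le inter_subset_right (by omega)
        have hD : 1 ≤ ∑ i ∈ A, g i := by
          rw [hsplit A, hAP]
          have h3 := Finset.sum_inter_add_sum_sdiff Nn A g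
          have h2 : ∑ i ∈ Nn \ A, g i ≤ -1 := by
            have hsub : Nn \ A ⊆ Nn := sdiff_subset
            have h4 := hleN (Nn \ A) hsub
            have hc1 : 1 ≤ (Nn \ A).card :=
              card_pos.mpr ⟨i0, mem_sdiff.mpr ⟨hi0N, hi0A⟩⟩
            have hc2 : (1:ℤ) ≤ ((Nn \ A).card : ℤ) := by exact_mod_cast hc1
            omega
          rw [inter_comm Nn A] at h3
          omega
        rw [hAP, hP1]
        have h5 : (∑ i ∈ A, g i) ≤ max 0 (∑ i ∈ A, ((b i : ℤ) - a i)) := by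
          rw [hgA]; exact le_max_right 0 _
        push_cast
        omega
    by_cases hN1 : Nn.card = 1
    · -- Case B: U = Nn = {i0}, V = {v}
      obtain ⟨v, hv⟩ := hPne
      have hNeq : Nn = {i0} := by
        obtain ⟨x, hx⟩ := Finset.card_eq_one.mp hN1
        rw [hx] at hi0N ⊢
        rw [mem_singleton] at hi0N
        rw [hi0N]
      refine main_aux ha hb hbef hi0 Nn {v} 1 le_rfl hN1 (by simp) hiN
        (fun i hi => by rw [mem_singleton] at hi; rw [hi]; exact hiP v hv)
        hi0N ?_ hs
      intro A
      have hmax0 : (0:ℤ) ≤ max 0 (∑ i ∈ A, ((b i : ℤ) - a i)) := le_max_left 0 _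
      have hgA : ∑ i ∈ A, ((b i : ℤ) - a i) = ∑ i ∈ A, g i := rfl
      by_cases hvA : v ∈ A
      · by_cases hi0A : i0 ∈ A
        · have h1 : A ∩ {v} = {v} := Finset.inter_singleton_of_mem hvA
          have h2 : {i0} ⊆ A ∩ Nn := by
            intro x hx; rw [mem_singleton] at hx; subst hx
            exact mem_inter.mpr ⟨hi0A, hi0N⟩
          have h3 : 1 ≤ (A ∩ Nn).card := by
            calc 1 = ({i0} : Finset (Fin q)).card := (card_singleton i0).symm
            _ ≤ _ := card_le_card h2
          rw [h1, card_singleton]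
          push_cast
          omega
        · have h1 : A ∩ {v} = {v} := Finset.inter_singleton_of_mem hvA
          have h2 : A ∩ Nn = ∅ := by
            rw [hNeq]
            rw [Finset.inter_singleton_of_notMem hi0A]
          have hD : 1 ≤ ∑ i ∈ A, g i := by
            rw [hsplit A, h2, sum_empty, add_zero]
            have h3 : 1 ≤ (A ∩ P).card :=
              card_pos.mpr ⟨v, mem_inter.mpr ⟨hvA, hv⟩⟩
            have h4 := hgeP (A ∩ P) inter_subset_right
            have h5 : (1:ℤ) ≤ ((A ∩ P).card : ℤ) := by exact_mod_cast h3
            omega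
          rw [h1, card_singleton]
          have h5 : (∑ i ∈ A, g i) ≤ max 0 (∑ i ∈ A, ((b i : ℤ) - a i)) := by
            rw [hgA]; exact le_max_right 0 _
          push_cast
          omega
      · have h1 : A ∩ {v} = ∅ := Finset.inter_singleton_of_notMem hvA
        rw [h1, card_empty]
        push_cast
        omega
    · -- Case C: P.card = 2, Nn.card = 2
      have hNne : Nn.Nonempty := ⟨i0, hi0N⟩
      have hP2 : P.card = 2 := by
        have h1 : 1 ≤ P.card := card_pos.mpr hPne
        have h2 : 1 ≤ Nn.card := card_pos.mpr hNne
        omega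
      have hN2 : Nn.card = 2 := by
        have h1 : 1 ≤ P.card := card_pos.mpr hPne
        have h2 : 1 ≤ Nn.card := card_pos.mpr hNne
        omega
      refine main_aux ha hb hbef hi0 Nn P 2 (by omega) hN2 hP2 hiN hiP hi0N ?_ hs
      intro A
      have hmax0 : (0:ℤ) ≤ max 0 (∑ i ∈ A, ((b i : ℤ) - a i)) := le_max_left 0 _
      have hgA : ∑ i ∈ A, ((b i : ℤ) - a i) = ∑ i ∈ A, g i := rfl
      have h5 : (∑ i ∈ A, g i) ≤ max 0 (∑ i ∈ A, ((b i : ℤ) - a i)) := by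
        rw [hgA]; exact le_max_right 0 _
      by_cases hc1 : (A ∩ P).card ≤ (A ∩ Nn).card
      · push_cast; omega
      push_neg at hc1
      by_cases hc2 : (A ∩ Nn).card = 0
      · have h1 : A ∩ Nn = ∅ := card_eq_zero.mp hc2
        have h2 := hsplit A
        rw [h1, sum_empty, add_zero] at h2
        have h3 := hgeP (A ∩ P) inter_subset_right
        push_cast
        omega
      · have hpcle : (A ∩ P).card ≤ 2 :=
          le_trans (card_le_card inter_subset_right) (le_of_eq hP2)
        have hncle : (A ∩ Nn).card ≤ 2 :=
          le_trans (card_le_card inter_subset_right) (le_of_eq hN2)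
        have hnc : (A ∩ Nn).card = 1 := by omega
        have hpc : (A ∩ P).card = 2 := by omega
        have hAP : A ∩ P = P :=
          Finset.eq_of_subset_of_card_le inter_subset_right (by omega)
        have h2 := hsplit A
        rw [hAP] at h2
        have h3 := Finset.sum_inter_add_sum_sdiff Nn A g
        rw [inter_comm Nn A] at h3
        have hcard : (Nn \ A).card = 1 := by
          have h6 := Finset.card_inter_add_card_sdiff Nn A
          rw [inter_comm Nn A] at h6
          omega
        have h4 := hleN (Nn \ A) sdiff_subset
        rw [hcard] at h4
        have hD : 1 ≤ ∑ i ∈ A, g i := by omega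
        rw [hAP, hP2, hnc]
        push_cast
        omega
  obtain ⟨c, hcr, hcb, hlex, hscarf, hdivc⟩ := key
  refine ⟨⟨c, hcr, hcb, hlex, hscarf, hdivc⟩, ?_⟩
  rintro ⟨hne, hsums, huniq⟩
  have hca : c ≠ a := by
    obtain ⟨i, hib, hia⟩ := hlex
    intro h; rw [h] at hia; omega
  have hτ := huniq (insert c {a, b}) (insert_nonempty _ _) ?_ ?_
  · have hcmem : c ∈ ({a, b} : Finset (Fin q → ℕ)) := hτ ▸ mem_insert_self c {a, b}
    rcases mem_insert.mp hcmem with h | h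
    · exact hca h
    · rw [mem_singleton] at h; exact hcb h
  · intro x hx
    rcases mem_insert.mp hx with h | h
    · subst h; exact hcr
    · exact hsums x h
  · intro A hA
    have h1 : eLabel (insert c {a, b}) A =
        (∑ i ∈ A, c i) ⊔ eLabel {a, b} A := Finset.sup_insert
    have h2 : eLabel {a, b} A = (∑ i ∈ A, a i) ⊔ (∑ i ∈ A, b i) := by
      simp [eLabel]
    have h3 := hdivc A hA
    rw [h1, h2, sup_eq_right.mpr]
    exact h3
end

section
/- Assume 1 ≤ q ≤ 4 and let a, b, c, d ∈ N^r_q. If the two-element sets {a, d} and {b, d} are Scarf faces of E_q^r (in particular a ≠ d and b ≠ d), and ∑_{i∈A} c_i ≤ max(∑_{i∈A} a_i, ∑_{i∈A} b_i) for every nonempty A ⊆ [q] (i.e., ε^c divides lcm(ε^a, ε^b)), then {c, d} is a Scarf face of E_q^r. -/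
open Finset

def fS {q : ℕ} (A : Finset (Fin q)) (u : Fin q → ℤ) : ℤ := ∑ i ∈ A, u i

def Compat {q : ℕ} (u w : Fin q → ℤ) : Prop :=
  ∀ A : Finset (Fin q), A.Nonempty →
    min (fS A u) 0 ≤ fS A w ∧ fS A w ≤ max (fS A u) 0

lemma fS_compl {q : ℕ} (A : Finset (Fin q)) (u : Fin q → ℤ) (h : ∑ i, u i = 0) :
    fS Aᶜ u = - fS A u := by
  have := Finset.sum_add_sum_compl A u
  rw [h] at this
  unfold fS
  omega

lemma eLabel_pair {q : ℕ} (x d : Fin q → ℕ) (A : Finset (Fin q)) :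
    eLabel {x, d} A = max (∑ i ∈ A, x i) (∑ i ∈ A, d i) := by
  simp [eLabel, Finset.sup_insert, Finset.sup_singleton]

lemma scarf_singleton {q r : ℕ} (d : Fin q → ℕ) (hd : ∑ i, d i = r) :
    IsScarf q r {d} := by
  refine ⟨⟨d, mem_singleton_self d⟩, ?_, ?_⟩
  · intro a ha; rw [Finset.mem_singleton] at ha; subst ha; exact hd
  · intro τ hne hsum hlab
    have hsub : τ ⊆ {d} := by
      intro e he
      rw [Finset.mem_singleton]
      have hle : ∀ i, e i ≤ d i := by
        intro i
        have h1 := hlab {i} ⟨i, mem_singleton_self i⟩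
        have h2 : (∑ j ∈ {i}, e j) ≤ eLabel τ {i} :=
          Finset.le_sup (f := fun a => ∑ j ∈ {i}, a j) he
        rw [h1] at h2
        simpa [eLabel] using h2
      have hse : ∑ i, e i = ∑ i, d i := by rw [hsum e he, hd]
      funext i
      by_contra hne'
      have hlt : e i < d i := lt_of_le_of_ne (hle i) hne'
      have : ∑ i, e i < ∑ i, d i :=
        Finset.sum_lt_sum (fun j _ => hle j) ⟨i, Finset.mem_univ i, hlt⟩
      omega
    obtain ⟨e, he⟩ := hne
    have := hsub he
    rw [Finset.mem_singleton] at this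
    subst this
    exact Finset.eq_singleton_iff_nonempty_unique_mem.mpr
      ⟨⟨e, he⟩, fun x hx => by have := hsub hx; rwa [Finset.mem_singleton] at this⟩

lemma fS_cast {q : ℕ} (A : Finset (Fin q)) (e : Fin q → ℕ) :
    fS A (fun i => (e i : ℤ)) = (∑ i ∈ A, e i : ℕ) := by
  unfold fS; push_cast; ring

lemma bridgeA {q r : ℕ} (hq : 0 < q) (x d : Fin q → ℕ)
    (hx : ∑ i, x i = r) (hd : ∑ i, d i = r)
    (hS : IsScarf q r {x, d})
    (w : Fin q → ℤ) (hw : Compat (fun i => (x i : ℤ) - d i) w) :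
    w = 0 ∨ w = fun i => (x i : ℤ) - d i := by
  set u : Fin q → ℤ := fun i => (x i : ℤ) - d i with hu
  -- singleton bounds
  have hwi : ∀ i, min (u i) 0 ≤ w i ∧ w i ≤ max (u i) 0 := by
    intro i
    have := hw {i} ⟨i, mem_singleton_self i⟩
    simpa [fS] using this
  have hnn : ∀ i, (0:ℤ) ≤ (d i : ℤ) + w i := by
    intro i
    have h1 := (hwi i).1
    simp only [hu] at h1
    omega
  -- e
  set e : Fin q → ℕ := fun i => ((d i : ℤ) + w i).toNat with he
  have hcast : ∀ i, (e i : ℤ) = (d i : ℤ) + w i := fun i => Int.toNat_of_nonneg (hnn i)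
  have husum : ∑ i, u i = 0 := by
    simp only [hu, Finset.sum_sub_distrib]
    rw [← Nat.cast_sum, ← Nat.cast_sum, hx, hd, sub_self]
  have hwsum : ∑ i, w i = 0 := by
    have := hw univ ⟨⟨0, hq⟩, mem_univ _⟩
    unfold fS at this
    rw [husum] at this
    simp at this
    omega
  have hesum : ∑ i, e i = r := by
    have : ((∑ i, e i : ℕ) : ℤ) = r := by
      push_cast [hcast]
      rw [Finset.sum_add_distrib, hwsum, ← Nat.cast_sum, hd, add_zero]
    exact_mod_cast this
  -- label bound
  have hA : ∀ A : Finset (Fin q), A.Nonempty →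
      ∑ i ∈ A, e i ≤ max (∑ i ∈ A, x i) (∑ i ∈ A, d i) := by
    intro A hAne
    have h1 := (hw A hAne).2
    have h2 : fS A u = fS A (fun i => (x i : ℤ)) - fS A (fun i => (d i : ℤ)) := by
      unfold fS; rw [← Finset.sum_sub_distrib]
    have h3 : fS A (fun i => (e i : ℤ)) = fS A (fun i => (d i : ℤ)) + fS A w := by
      unfold fS; rw [← Finset.sum_add_distrib]
      exact Finset.sum_congr rfl (fun i _ => hcast i)
    have hxA := fS_cast A x
    have hdA := fS_cast A d
    have heA := fS_cast A e
    have : ((∑ i ∈ A, e i : ℕ) : ℤ) ≤ max ((∑ i ∈ A, x i : ℕ) : ℤ) ((∑ i ∈ A, d i : ℕ) : ℤ) := by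
      rw [← hxA, ← hdA, ← heA]
      omega
    have := this
    rw [← Nat.cast_max] at this
    exact_mod_cast this
  -- apply Scarf
  have hτ := hS.2.2 (insert e {x, d}) ⟨e, mem_insert_self _ _⟩ ?_ ?_
  · have hemem : e ∈ ({x, d} : Finset (Fin q → ℕ)) := by
      rw [← hτ]; exact mem_insert_self _ _
    rw [Finset.mem_insert, Finset.mem_singleton] at hemem
    rcases hemem with h | h
    · right
      funext i
      have := hcast i
      rw [h] at this
      simp only [hu]
      omega
    · left
      funext i
      have := hcast i
      rw [h] at this
      simp
      omega
  · intro a haa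
    rw [Finset.mem_insert, Finset.mem_insert, Finset.mem_singleton] at haa
    rcases haa with h | h | h <;> subst h
    · exact hesum
    · exact hx
    · exact hd
  · intro A hAne
    rw [eLabel_pair]
    have : eLabel (insert e {x, d}) A
        = max (∑ i ∈ A, e i) (eLabel {x, d} A) := by
      simp [eLabel, Finset.sup_insert]
    rw [this, eLabel_pair]
    have := hA A hAne
    omega

lemma exists_lt_of_ne {q r : ℕ} (x d : Fin q → ℕ) (hx : ∑ i, x i = r)
    (hd : ∑ i, d i = r) (hne : x ≠ d) : ∃ i, d i < x i := by
  by_contra h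
  push_neg at h
  apply hne
  funext i
  by_contra hne'
  have hlt : x i < d i := lt_of_le_of_ne (h i) hne'
  have : ∑ i, x i < ∑ i, d i :=
    Finset.sum_lt_sum (fun j _ => h j) ⟨i, Finset.mem_univ i, hlt⟩
  omega

lemma bridgeB {q r : ℕ} (hq : 0 < q) (x d : Fin q → ℕ)
    (hx : ∑ i, x i = r) (hd : ∑ i, d i = r) (hxd : x ≠ d)
    (hk : ∀ w : Fin q → ℤ, Compat (fun i => (x i : ℤ) - d i) w →
      w = 0 ∨ w = fun i => (x i : ℤ) - d i) :
    IsScarf q r {x, d} := by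
  set u : Fin q → ℤ := fun i => (x i : ℤ) - d i with hu
  refine ⟨⟨x, mem_insert_self _ _⟩, ?_, ?_⟩
  · intro a haa
    rw [Finset.mem_insert, Finset.mem_singleton] at haa
    rcases haa with h | h <;> subst h
    · exact hx
    · exact hd
  intro τ hne hsum hlab
  -- upper bounds for members of τ
  have hub : ∀ e ∈ τ, ∀ A : Finset (Fin q), A.Nonempty →
      ∑ i ∈ A, e i ≤ max (∑ i ∈ A, x i) (∑ i ∈ A, d i) := by
    intro e he A hAne
    have h2 : (∑ i ∈ A, e i) ≤ eLabel τ A :=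
      Finset.le_sup (f := fun a => ∑ i ∈ A, a i) he
    rw [hlab A hAne, eLabel_pair] at h2
    exact h2
  -- subset
  have hsub : τ ⊆ {x, d} := by
    intro e he
    have hcompat : Compat u (fun i => (e i : ℤ) - d i) := by
      intro A hAne
      have hAx := fS_cast A x
      have hAd := fS_cast A d
      have hAe := fS_cast A e
      have hfu : fS A u = fS A (fun i => (x i : ℤ)) - fS A (fun i => (d i : ℤ)) := by
        unfold fS; rw [← Finset.sum_sub_distrib]
      have hfw : fS A (fun i => (e i : ℤ) - d i)
          = fS A (fun i => (e i : ℤ)) - fS A (fun i => (d i : ℤ)) := by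
        unfold fS; rw [← Finset.sum_sub_distrib]
      have hupper := hub e he A hAne
      constructor
      · -- lower bound
        by_cases hAuniv : A = univ
        · subst hAuniv
          have h1 : (∑ i ∈ univ, e i) = r := hsum e he
          have hfu0 : fS univ u = 0 := by
            rw [hfu, hAx, hAd]
            push_cast [hx, hd]; ring
          rw [hfu0, hfw, hAe, hAd]
          push_cast [h1, hd]
          omega
        · have hAcne : Aᶜ.Nonempty := by
            rw [Finset.nonempty_iff_ne_empty]; simpa using hAuniv
          have hubc := hub e he Aᶜ hAcne
          -- sums over A and Aᶜ
          have hce := Finset.sum_add_sum_compl A e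
          have hcx := Finset.sum_add_sum_compl A x
          have hcd := Finset.sum_add_sum_compl A d
          rw [hsum e he] at hce
          rw [hx] at hcx
          rw [hd] at hcd
          rw [hfu, hfw, hAx, hAd, hAe]
          omega
      · rw [hfu, hfw, hAx, hAd, hAe]
        omega
    rcases hk _ hcompat with h | h
    · have : e = d := by
        funext i
        have := congrFun h i
        simp at this
        omega
      rw [this]; exact Finset.mem_insert_of_mem (mem_singleton_self d)
    · have : e = x := by
        funext i
        have := congrFun h i
        simp only [hu] at this
        omega
      rw [this]; exact mem_insert_self _ _
  -- x ∈ τ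
  have hxτ : x ∈ τ := by
    obtain ⟨i, hi⟩ := exists_lt_of_ne x d hx hd hxd
    obtain ⟨e, he, hev⟩ := Finset.exists_mem_eq_sup τ hne (fun a => ∑ j ∈ {i}, a j)
    have h1 := hlab {i} ⟨i, mem_singleton_self i⟩
    have h2 : eLabel τ {i} = e i := by simpa [eLabel] using hev
    rw [h2, eLabel_pair] at h1
    simp only [Finset.sum_singleton] at h1
    have := hsub he
    rw [Finset.mem_insert, Finset.mem_singleton] at this
    rcases this with h | h
    · rwa [h] at he
    · exfalso; have h9 := congrFun h i; clear hev h2 hk hu hlab hsub hub hsum h; omega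
  have hdτ : d ∈ τ := by
    obtain ⟨i, hi⟩ := exists_lt_of_ne d x hd hx (Ne.symm hxd)
    obtain ⟨e, he, hev⟩ := Finset.exists_mem_eq_sup τ hne (fun a => ∑ j ∈ {i}, a j)
    have h1 := hlab {i} ⟨i, mem_singleton_self i⟩
    have h2 : eLabel τ {i} = e i := by simpa [eLabel] using hev
    rw [h2, eLabel_pair] at h1
    simp only [Finset.sum_singleton] at h1
    have := hsub he
    rw [Finset.mem_insert, Finset.mem_singleton] at this
    rcases this with h | h
    · exfalso; have h9 := congrFun h i; clear hev h2 hk hu hlab hsub hub hsum h; omega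
    · rwa [h] at he
  exact Finset.Subset.antisymm hsub (by
    intro z hz
    rw [Finset.mem_insert, Finset.mem_singleton] at hz
    rcases hz with h | h <;> subst h
    · exact hxτ
    · exact hdτ)

lemma squeeze {m z : ℤ} (hm : 1 ≤ m) : min (m * z) 0 ≤ z ∧ z ≤ max (m * z) 0 := by
  rcases le_total z 0 with h | h
  · have h1 : m * z ≤ z := by nlinarith
    exact ⟨(min_le_left _ _).trans h1, h.trans (le_max_right _ _)⟩
  · have h1 : z ≤ m * z := by nlinarith
    exact ⟨(min_le_right _ _).trans h, h1.trans (le_max_left _ _)⟩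

lemma lemCpos {q : ℕ} (hq4 : q ≤ 4) (u : Fin q → ℤ) (hsum : ∑ i, u i = 0)
    (k : Fin q) (hk : 2 ≤ u k) :
    ∃ w : Fin q → ℤ, Compat u w ∧ w ≠ 0 ∧ w ≠ u := by
  have hne : (univ : Finset (Fin q)).Nonempty := ⟨k, mem_univ k⟩
  obtain ⟨i, -, hi⟩ := Finset.exists_max_image univ u hne
  obtain ⟨j, -, hj⟩ := Finset.exists_min_image univ u hne
  have hui : 2 ≤ u i := le_trans hk (hi k (mem_univ k))
  have huj : u j ≤ -1 := by
    by_contra hc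
    push_neg at hc
    have hnn : ∀ t ∈ (univ : Finset (Fin q)), 0 ≤ u t := fun t _ =>
      le_trans (by omega) (hj t (mem_univ t))
    have := Finset.single_le_sum hnn (mem_univ i)
    omega
  have hij : i ≠ j := fun h => by rw [h] at hui; omega
  by_cases hgood : ∀ A : Finset (Fin q), i ∈ A → j ∉ A → 1 ≤ fS A u
  · -- w = e_i - e_j
    refine ⟨fun t => (if t = i then 1 else 0) + (if t = j then -1 else 0), ?_, ?_, ?_⟩
    · intro A hAne
      have hfw : fS A (fun t => (if t = i then (1:ℤ) else 0) + (if t = j then -1 else 0))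
          = (if i ∈ A then (1:ℤ) else 0) + (if j ∈ A then -1 else 0) := by
        unfold fS
        rw [Finset.sum_add_distrib]
        rw [Finset.sum_ite_eq' A i (fun _ => (1:ℤ)), Finset.sum_ite_eq' A j (fun _ => (-1:ℤ))]
      rw [hfw]
      by_cases hiA : i ∈ A <;> by_cases hjA : j ∈ A
      · rw [if_pos hiA, if_pos hjA]; omega
      · have h1 := hgood A hiA hjA
        rw [if_pos hiA, if_neg hjA]; omega
      · have hic : i ∈ Aᶜ := Finset.mem_compl.mpr hiA
        have hjc : j ∉ Aᶜ := fun hh => (Finset.mem_compl.mp hh) hjA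
        have h1 := hgood Aᶜ hic hjc
        have h2 := fS_compl A u hsum
        rw [if_neg hiA, if_pos hjA]; omega
      · rw [if_neg hiA, if_neg hjA]; omega
    · intro hcon
      have h9 := congrFun hcon i
      rw [if_pos rfl, if_neg hij] at h9
      simp at h9
    · intro hcon
      have h9 := congrFun hcon i
      rw [if_pos rfl, if_neg hij] at h9
      omega
  · -- classification: pattern case
    push_neg at hgood
    obtain ⟨A0, hiA0, hjA0, hA0⟩ := hgood
    have hA0' : fS A0 u ≤ 0 := by omega
    set B := A0.erase i with hB
    set C := (insert j A0)ᶜ with hC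
    have hsplit : u i + fS B u = fS A0 u := by
      unfold fS
      exact Finset.add_sum_erase A0 u hiA0
    have hfB : fS B u ≤ - u i := by omega
    have hins : fS (insert j A0) u = u j + fS A0 u := by
      unfold fS
      exact Finset.sum_insert hjA0
    have hfC : fS C u = - (u j + fS A0 u) := by
      rw [hC, fS_compl _ u hsum, hins]
    have hfC1 : 1 ≤ fS C u := by omega
    have hBne : B.Nonempty := by
      rw [Finset.nonempty_iff_ne_empty]
      intro hemp
      rw [hemp] at hfB
      unfold fS at hfB
      simp only [Finset.sum_empty] at hfB
      omega
    have hCne : C.Nonempty := by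
      rw [Finset.nonempty_iff_ne_empty]
      intro hemp
      rw [hemp] at hfC1
      unfold fS at hfC1
      simp only [Finset.sum_empty] at hfC1
      omega
    have hcards : (insert j A0).card + C.card = q := by
      rw [hC, Finset.card_add_card_compl]
      simp
    have hcardA0 : (insert j A0).card = A0.card + 1 := Finset.card_insert_of_notMem hjA0
    have hcardB : A0.card = B.card + 1 := by
      rw [hB, Finset.card_erase_of_mem hiA0]
      have : 1 ≤ A0.card := Finset.card_pos.mpr ⟨i, hiA0⟩
      omega
    have hBpos := Finset.card_pos.mpr hBne
    have hCpos := Finset.card_pos.mpr hCne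
    have hB1 : B.card = 1 := by omega
    have hC1 : C.card = 1 := by omega
    obtain ⟨kk, hkk⟩ := Finset.card_eq_one.mp hB1
    obtain ⟨ll, hll⟩ := Finset.card_eq_one.mp hC1
    have hukk : fS B u = u kk := by rw [hkk]; unfold fS; simp
    have hull : fS C u = u ll := by rw [hll]; unfold fS; simp
    have hkkB : kk ∈ B := by rw [hkk]; exact mem_singleton_self kk
    have hllC : ll ∈ C := by rw [hll]; exact mem_singleton_self ll
    have hkki : kk ≠ i := Finset.ne_of_mem_erase hkkB
    have hkkA0 : kk ∈ A0 := Finset.mem_of_mem_erase hkkB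
    have hkkj : kk ≠ j := fun h => hjA0 (h ▸ hkkA0)
    have hllnotins : ll ∉ insert j A0 := Finset.mem_compl.mp hllC
    have hllj : ll ≠ j := fun h => hllnotins (h ▸ Finset.mem_insert_self j A0)
    have hlli : ll ≠ i := fun h => hllnotins (Finset.mem_insert_of_mem (h ▸ hiA0))
    have hllkk : ll ≠ kk := fun h => hllnotins (Finset.mem_insert_of_mem (h ▸ hkkA0))
    have hukk' : u kk ≤ - u i := by omega
    have hull' : u ll ≤ u i := hi ll (mem_univ ll)
    have hujkk : u j ≤ u kk := hj kk (mem_univ kk)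
    have htot : u i + u j + u kk + u ll = 0 := by
      have h1 := hfC
      rw [hull] at h1
      omega
    have hvkk : u kk = - u i := by omega
    have hvj : u j = - u i := by omega
    have hvll : u ll = u i := by omega
    have hq4' : q = 4 := by omega
    have hjmem : j ∉ ({kk, ll} : Finset (Fin q)) := by
      simp only [Finset.mem_insert, Finset.mem_singleton]
      push_neg
      exact ⟨hkkj.symm, hllj.symm⟩
    have himem : i ∉ ({j, kk, ll} : Finset (Fin q)) := by
      simp only [Finset.mem_insert, Finset.mem_singleton]
      push_neg
      exact ⟨hij, hkki.symm, hlli.symm⟩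
    have hScard : ({i, j, kk, ll} : Finset (Fin q)).card = 4 := by
      rw [Finset.card_insert_of_notMem himem, Finset.card_insert_of_notMem hjmem,
        Finset.card_pair hllkk.symm]
    have hSuniv : ({i, j, kk, ll} : Finset (Fin q)) = univ :=
      Finset.eq_univ_of_card _ (by rw [hScard, Fintype.card_fin]; omega)
    have hmem : ∀ t : Fin q, t = i ∨ t = j ∨ t = kk ∨ t = ll := by
      intro t
      have ht : t ∈ ({i, j, kk, ll} : Finset (Fin q)) := hSuniv ▸ mem_univ t
      simpa using ht
    refine ⟨fun t => if t = i then 1 else if t = ll then 1 else -1, ?_, ?_, ?_⟩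
    · intro A hAne
      have hval : ∀ t, u t = u i * (if t = i then (1:ℤ) else if t = ll then 1 else -1) := by
        intro t
        rcases hmem t with h | h | h | h <;> subst h
        · rw [if_pos rfl]; ring
        · rw [if_neg hij.symm, if_neg hllj.symm]; omega
        · rw [if_neg hkki, if_neg hllkk.symm]; omega
        · rw [if_neg hlli, if_pos rfl]; omega
      have hfu : fS A u = u i * fS A (fun t => if t = i then (1:ℤ) else if t = ll then 1 else -1) := by
        unfold fS
        rw [Finset.mul_sum]
        exact Finset.sum_congr rfl (fun t _ => hval t)
      rw [hfu]
      exact squeeze (by omega)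
    · intro hcon
      have h9 := congrFun hcon i
      rw [if_pos rfl] at h9
      simp at h9
    · intro hcon
      have h9 := congrFun hcon i
      rw [if_pos rfl] at h9
      omega

lemma compat_neg {q : ℕ} (u w : Fin q → ℤ) (h : Compat u w) : Compat (-u) (-w) := by
  intro A hAne
  have h1 := h A hAne
  have h2 : fS A (-u) = - fS A u := by unfold fS; simp
  have h3 : fS A (-w) = - fS A w := by unfold fS; simp
  rw [h2, h3]
  omega

lemma lemC {q : ℕ} (hq4 : q ≤ 4) (u : Fin q → ℤ) (hsum : ∑ i, u i = 0)
    (k : Fin q) (hk : 2 ≤ u k ∨ u k ≤ -2) :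
    ∃ w : Fin q → ℤ, Compat u w ∧ w ≠ 0 ∧ w ≠ u := by
  rcases hk with hk | hk
  · exact lemCpos hq4 u hsum k hk
  · have hsum' : ∑ i, (-u) i = 0 := by
      simp only [Pi.neg_apply]
      rw [Finset.sum_neg_distrib, hsum, neg_zero]
    have hk' : 2 ≤ (-u) k := by simp only [Pi.neg_apply]; omega
    obtain ⟨w, hw, hw0, hwu⟩ := lemCpos hq4 (-u) hsum' k hk'
    refine ⟨-w, ?_, ?_, ?_⟩
    · have := compat_neg (-u) w hw
      simpa using this
    · intro h; apply hw0; have : w = - -w := by simp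
      rw [this, h]; simp
    · intro h
      apply hwu
      funext t
      have := congrFun h t
      simp only [Pi.neg_apply] at this ⊢
      omega

lemma lemD {q : ℕ} (hq : 0 < q) (hq4 : q ≤ 4) (u : Fin q → ℤ)
    (hpm : ∀ i, u i = -1 ∨ u i = 0 ∨ u i = 1) (hsum : ∑ i, u i = 0)
    (w : Fin q → ℤ) (hw : Compat u w) : w = 0 ∨ w = u := by
  have hwi : ∀ i, w i = 0 ∨ w i = u i := by
    intro i
    have h1 := hw {i} ⟨i, mem_singleton_self i⟩
    unfold fS at h1
    simp only [Finset.sum_singleton] at h1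
    rcases hpm i with h | h | h <;> omega
  have hwsum : ∑ i, w i = 0 := by
    have h1 := hw univ ⟨⟨0, hq⟩, mem_univ _⟩
    unfold fS at h1
    rw [hsum] at h1
    omega
  classical
  set P := univ.filter (fun i => u i = 1) with hP
  set N := univ.filter (fun i => u i = -1) with hN
  have hcardPN : ∑ i, u i = (P.card : ℤ) - N.card := by
    have : ∀ i, u i = (if u i = 1 then (1:ℤ) else 0) - (if u i = -1 then 1 else 0) := by
      intro i; rcases hpm i with h | h | h <;> simp [h]
    calc ∑ i, u i = ∑ i, ((if u i = 1 then (1:ℤ) else 0) - (if u i = -1 then 1 else 0)) :=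
          Finset.sum_congr rfl (fun i _ => this i)
      _ = (∑ i, if u i = 1 then (1:ℤ) else 0) - ∑ i, if u i = -1 then (1:ℤ) else 0 := by
          rw [Finset.sum_sub_distrib]
      _ = (P.card : ℤ) - N.card := by rw [Finset.sum_boole, Finset.sum_boole]
  have hPN : P.card = N.card := by omega
  have hdisj : Disjoint P N := by
    rw [Finset.disjoint_left]
    intro t htP htN
    rw [hP, Finset.mem_filter] at htP
    rw [hN, Finset.mem_filter] at htN
    omega
  have hcard : P.card + N.card ≤ q := by
    have h1 : (P ∪ N).card = P.card + N.card := Finset.card_union_of_disjoint hdisj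
    have h2 : (P ∪ N).card ≤ q := by
      have := Finset.card_le_card (Finset.subset_univ (P ∪ N))
      simpa using this
    omega
  have hP2 : P.card ≤ 2 := by omega
  have huP : ∀ t, u t = 1 → t ∈ P := by
    intro t ht; rw [hP, Finset.mem_filter]; exact ⟨mem_univ t, ht⟩
  have huN : ∀ t, u t = -1 → t ∈ N := by
    intro t ht; rw [hN, Finset.mem_filter]; exact ⟨mem_univ t, ht⟩
  interval_cases hPc : P.card
  · -- card 0 : u = 0
    have hu0 : ∀ t, u t = 0 := by
      intro t
      rcases hpm t with h | h | h
      · exfalso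
        have : t ∈ N := huN t h
        have : N.card ≠ 0 := Finset.card_ne_zero_of_mem this
        omega
      · exact h
      · exfalso
        have : t ∈ P := huP t h
        have : P.card ≠ 0 := Finset.card_ne_zero_of_mem this
        omega
    left
    funext t
    have := hwi t
    have := hu0 t
    simp only [Pi.zero_apply]
    omega
  · -- card 1
    obtain ⟨p, hp⟩ := Finset.card_eq_one.mp hPc
    obtain ⟨n, hn⟩ := Finset.card_eq_one.mp (show N.card = 1 by omega)
    have hup : u p = 1 := by
      have : p ∈ P := hp ▸ mem_singleton_self p
      rw [hP, Finset.mem_filter] at this; exact this.2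
    have hun : u n = -1 := by
      have : n ∈ N := hn ▸ mem_singleton_self n
      rw [hN, Finset.mem_filter] at this; exact this.2
    have hpn : p ≠ n := fun h => by rw [h, hun] at hup; omega
    have hother : ∀ t, t ≠ p → t ≠ n → u t = 0 := by
      intro t htp htn
      rcases hpm t with h | h | h
      · exfalso; have := huN t h; rw [hn, Finset.mem_singleton] at this; exact htn this
      · exact h
      · exfalso; have := huP t h; rw [hp, Finset.mem_singleton] at this; exact htp this
    have hwother : ∀ t, t ≠ p → t ≠ n → w t = 0 := by
      intro t htp htn
      have := hwi t
      have := hother t htp htn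
      omega
    have hsum2 : w p + w n = 0 := by
      have h1 : ∑ t ∈ ({p, n} : Finset (Fin q)), w t = ∑ t, w t := by
        apply Finset.sum_subset (Finset.subset_univ _)
        intro t _ ht
        simp only [Finset.mem_insert, Finset.mem_singleton] at ht
        push_neg at ht
        exact hwother t ht.1 ht.2
      rw [Finset.sum_pair hpn] at h1
      omega
    have hwp := hwi p
    have hwn := hwi n
    rcases hwp with h | h
    · left
      funext t
      simp only [Pi.zero_apply]
      by_cases h1 : t = p
      · subst h1; omega
      · by_cases h2 : t = n
        · subst h2; omega
        · exact hwother t h1 h2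
    · right
      funext t
      by_cases h1 : t = p
      · subst h1; omega
      · by_cases h2 : t = n
        · subst h2; omega
        · rw [hwother t h1 h2, hother t h1 h2]
  · -- card 2
    obtain ⟨p1, p2, hp12, hp⟩ := Finset.card_eq_two.mp hPc
    obtain ⟨n1, n2, hn12, hn⟩ := Finset.card_eq_two.mp (show N.card = 2 by omega)
    have hmemP : ∀ t, t ∈ P ↔ (t = p1 ∨ t = p2) := by
      intro t; rw [hp]; simp
    have hmemN : ∀ t, t ∈ N ↔ (t = n1 ∨ t = n2) := by
      intro t; rw [hn]; simp
    have hup1 : u p1 = 1 := by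
      have : p1 ∈ P := (hmemP p1).mpr (Or.inl rfl)
      rw [hP, Finset.mem_filter] at this; exact this.2
    have hup2 : u p2 = 1 := by
      have : p2 ∈ P := (hmemP p2).mpr (Or.inr rfl)
      rw [hP, Finset.mem_filter] at this; exact this.2
    have hun1 : u n1 = -1 := by
      have : n1 ∈ N := (hmemN n1).mpr (Or.inl rfl)
      rw [hN, Finset.mem_filter] at this; exact this.2
    have hun2 : u n2 = -1 := by
      have : n2 ∈ N := (hmemN n2).mpr (Or.inr rfl)
      rw [hN, Finset.mem_filter] at this; exact this.2
    have hdist : ∀ p n, u p = 1 → u n = -1 → p ≠ n := by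
      intro p n h1 h2 h; rw [h, h2] at h1; omega
    have key : ∀ p n, u p = 1 → u n = -1 → w p + w n = 0 := by
      intro p n h1 h2
      have hpn := hdist p n h1 h2
      have h3 := hw {p, n} ⟨p, Finset.mem_insert_self _ _⟩
      unfold fS at h3
      rw [Finset.sum_pair hpn, Finset.sum_pair hpn] at h3
      rw [h1, h2] at h3
      omega
    have e11 := key p1 n1 hup1 hun1
    have e12 := key p1 n2 hup1 hun2
    have e21 := key p2 n1 hup2 hun1
    have e22 := key p2 n2 hup2 hun2
    have hother : ∀ t, t ≠ p1 → t ≠ p2 → t ≠ n1 → t ≠ n2 → u t = 0 := by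
      intro t h1 h2 h3 h4
      rcases hpm t with h | h | h
      · exfalso; have := (hmemN t).mp (huN t h); tauto
      · exact h
      · exfalso; have := (hmemP t).mp (huP t h); tauto
    have hwother : ∀ t, t ≠ p1 → t ≠ p2 → t ≠ n1 → t ≠ n2 → w t = 0 := by
      intro t h1 h2 h3 h4
      have := hwi t
      have := hother t h1 h2 h3 h4
      omega
    have hwp1 := hwi p1
    have hwp2 := hwi p2
    have hwn1 := hwi n1
    have hwn2 := hwi n2
    rcases hwp1 with h | h
    · left
      funext t
      simp only [Pi.zero_apply]
      by_cases h1 : t = p1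
      · subst h1; omega
      · by_cases h2 : t = p2
        · subst h2; omega
        · by_cases h3 : t = n1
          · subst h3; omega
          · by_cases h4 : t = n2
            · subst h4; omega
            · exact hwother t h1 h2 h3 h4
    · right
      funext t
      by_cases h1 : t = p1
      · subst h1; omega
      · by_cases h2 : t = p2
        · subst h2; omega
        · by_cases h3 : t = n1
          · subst h3; omega
          · by_cases h4 : t = n2
            · subst h4; omega
            · rw [hwother t h1 h2 h3 h4, hother t h1 h2 h3 h4]

lemma scarf_pm1 {q r : ℕ} (hq : 0 < q) (hq4 : q ≤ 4) (x d : Fin q → ℕ)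
    (hx : ∑ i, x i = r) (hd : ∑ i, d i = r) (hS : IsScarf q r {x, d}) (i : Fin q) :
    (x i : ℤ) - d i = -1 ∨ (x i : ℤ) - d i = 0 ∨ (x i : ℤ) - d i = 1 := by
  by_contra hcon
  push_neg at hcon
  have husum : ∑ t, ((x t : ℤ) - d t) = 0 := by
    rw [Finset.sum_sub_distrib, ← Nat.cast_sum, ← Nat.cast_sum, hx, hd, sub_self]
  have hbig : 2 ≤ (x i : ℤ) - d i ∨ (x i : ℤ) - d i ≤ -2 := by omega
  obtain ⟨w, hw, hw0, hwu⟩ := lemC hq4 (fun t => (x t : ℤ) - d t) husum i hbig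
  rcases bridgeA hq x d hx hd hS w hw with h | h
  · exact hw0 h
  · exact hwu h

/-- Lemma (l:d): for `1 ≤ q ≤ 4`, if the two-element sets `{a, d}` and
`{b, d}` are Scarf faces of `E_q^r` and `ε^c ∣ lcm(ε^a, ε^b)`, then `{c, d}`
is a Scarf face of `E_q^r`. -/
theorem stmt13 (q r : ℕ) (hq1 : 1 ≤ q) (hq4 : q ≤ 4) (hr : 1 ≤ r)
    (a b c d : Fin q → ℕ)
    (ha : ∑ i, a i = r) (hb : ∑ i, b i = r)
    (hc : ∑ i, c i = r) (hd : ∑ i, d i = r)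
    (hadne : a ≠ d) (hbdne : b ≠ d)
    (had : IsScarf q r {a, d}) (hbd : IsScarf q r {b, d})
    (hdiv : ∀ A : Finset (Fin q), A.Nonempty →
      ∑ i ∈ A, c i ≤ max (∑ i ∈ A, a i) (∑ i ∈ A, b i)) :
    IsScarf q r {c, d} := by
  have hq : 0 < q := hq1
  by_cases hcd : c = d
  · subst hcd
    have hpair : ({c, c} : Finset (Fin q → ℕ)) = {c} := by simp
    rw [hpair]
    exact scarf_singleton c hc
  · have hq2 : 2 ≤ q := by
      by_contra hlt
      have hq1' : q = 1 := by omega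
      apply hadne
      subst hq1'
      funext i
      have hi : i = 0 := Subsingleton.elim i 0
      have ha' : a 0 = r := by rw [← ha, Fin.sum_univ_one]
      have hd' : d 0 = r := by rw [← hd, Fin.sum_univ_one]
      rw [hi, ha', hd']
    apply bridgeB hq c d hc hd hcd
    intro w hw
    have hu := fun i => scarf_pm1 hq hq4 a d ha hd had i
    have hv := fun i => scarf_pm1 hq hq4 b d hb hd hbd i
    have htpm : ∀ i, (c i : ℤ) - d i = -1 ∨ (c i : ℤ) - d i = 0 ∨ (c i : ℤ) - d i = 1 := by
      intro i
      have hupper : c i ≤ max (a i) (b i) := by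
        have := hdiv {i} ⟨i, mem_singleton_self i⟩
        simpa using this
      have hlower : min (a i) (b i) ≤ c i := by
        have hAcne : (({i} : Finset (Fin q))ᶜ).Nonempty := by
          obtain ⟨j, hj⟩ := Fintype.exists_ne_of_one_lt_card
            (by simp only [Fintype.card_fin]; omega : 1 < Fintype.card (Fin q)) i
          exact ⟨j, Finset.mem_compl.mpr (by simpa using hj)⟩
        have h1 := hdiv (({i} : Finset (Fin q))ᶜ) hAcne
        have hca := Finset.sum_add_sum_compl ({i} : Finset (Fin q)) a
        have hcb := Finset.sum_add_sum_compl ({i} : Finset (Fin q)) b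
        have hcc := Finset.sum_add_sum_compl ({i} : Finset (Fin q)) c
        rw [ha] at hca; rw [hb] at hcb; rw [hc] at hcc
        simp only [Finset.sum_singleton] at hca hcb hcc
        omega
      have h1 := hu i
      have h2 := hv i
      omega
    have htsum : ∑ i, ((c i : ℤ) - d i) = 0 := by
      rw [Finset.sum_sub_distrib, ← Nat.cast_sum, ← Nat.cast_sum, hc, hd, sub_self]
    exact lemD hq hq4 (fun i => (c i : ℤ) - d i) htpm htsum w hw
end

section
/- Let q ≥ 5 and r = 3. The two-element set σ = {2e_1 + e_2, e_3 + e_4 + e_5} (corresponding to the monomials ε_1²ε_2 and ε_3ε_4ε_5) is a Scarf face of E_q^3, yet σ is not contained in any set aU with a ∈ ℕ^q and |a| ≤ 3 (indeed |a_1 − b_1| = 2 for its two elements a, b). Hence for q ≥ 5 the Scarf complex of E_q^3 strictly contains the complex U^3_q. -/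
open Finset

/-- The vector `2e_1 + e_2` (0-indexed: value 2 at index 0, 1 at index 1). -/
def vA (q : ℕ) : Fin q → ℕ :=
  fun i => if i.val = 0 then 2 else if i.val = 1 then 1 else 0

/-- The vector `e_3 + e_4 + e_5` (0-indexed: value 1 at indices 2, 3, 4). -/
def vB (q : ℕ) : Fin q → ℕ :=
  fun i => if i.val = 2 ∨ i.val = 3 ∨ i.val = 4 then 1 else 0

/-! Auxiliary material. -/

def j0 {q : ℕ} (hq : 5 ≤ q) : Fin q := ⟨0, by omega⟩
def j1 {q : ℕ} (hq : 5 ≤ q) : Fin q := ⟨1, by omega⟩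
def j2 {q : ℕ} (hq : 5 ≤ q) : Fin q := ⟨2, by omega⟩
def j3 {q : ℕ} (hq : 5 ≤ q) : Fin q := ⟨3, by omega⟩
def j4 {q : ℕ} (hq : 5 ≤ q) : Fin q := ⟨4, by omega⟩

lemma sumA {q : ℕ} (hq : 5 ≤ q) (A : Finset (Fin q)) :
    ∑ i ∈ A, vA q i = (if j0 hq ∈ A then 2 else 0) + (if j1 hq ∈ A then 1 else 0) := by
  have hpt : ∀ i : Fin q, vA q i =
      (if i = j0 hq then 2 else 0) + (if i = j1 hq then 1 else 0) := by
    intro i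
    simp only [vA, Fin.ext_iff, j0, j1]
    split_ifs <;> omega
  rw [Finset.sum_congr rfl fun i _ => hpt i, Finset.sum_add_distrib,
    Finset.sum_ite_eq' A, Finset.sum_ite_eq' A]

lemma sumB {q : ℕ} (hq : 5 ≤ q) (A : Finset (Fin q)) :
    ∑ i ∈ A, vB q i = (if j2 hq ∈ A then 1 else 0) + (if j3 hq ∈ A then 1 else 0)
      + (if j4 hq ∈ A then 1 else 0) := by
  have hpt : ∀ i : Fin q, vB q i =
      (if i = j2 hq then 1 else 0) + (if i = j3 hq then 1 else 0)
        + (if i = j4 hq then 1 else 0) := by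
    intro i
    simp only [vB, Fin.ext_iff, j2, j3, j4]
    split_ifs <;> omega
  rw [Finset.sum_congr rfl fun i _ => hpt i, Finset.sum_add_distrib, Finset.sum_add_distrib,
    Finset.sum_ite_eq' A, Finset.sum_ite_eq' A, Finset.sum_ite_eq' A]

lemma labelσ {q : ℕ} (hq : 5 ≤ q) (A : Finset (Fin q)) :
    eLabel {vA q, vB q} A =
      max ((if j0 hq ∈ A then 2 else 0) + (if j1 hq ∈ A then 1 else 0))
        ((if j2 hq ∈ A then 1 else 0) + (if j3 hq ∈ A then 1 else 0)
          + (if j4 hq ∈ A then 1 else 0)) := by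
  simp [eLabel, sumA hq, sumB hq]

lemma sum_five {q : ℕ} (hq : 5 ≤ q) (c : Fin q → ℕ)
    (h5 : ∀ i : Fin q, 5 ≤ i.val → c i = 0) :
    ∑ i, c i = c (j0 hq) + c (j1 hq) + c (j2 hq) + c (j3 hq) + c (j4 hq) := by
  have hpt : ∀ i : Fin q, c i =
      (if i = j0 hq then c (j0 hq) else 0) + (if i = j1 hq then c (j1 hq) else 0)
      + (if i = j2 hq then c (j2 hq) else 0) + (if i = j3 hq then c (j3 hq) else 0)
      + (if i = j4 hq then c (j4 hq) else 0) := by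
    intro i
    rcases (show i.val = 0 ∨ i.val = 1 ∨ i.val = 2 ∨ i.val = 3 ∨ i.val = 4 ∨ 5 ≤ i.val by omega)
      with h|h|h|h|h|h
    · rw [show i = j0 hq from Fin.ext h]; simp [j0, j1, j2, j3, j4, Fin.ext_iff]
    · rw [show i = j1 hq from Fin.ext h]; simp [j0, j1, j2, j3, j4, Fin.ext_iff]
    · rw [show i = j2 hq from Fin.ext h]; simp [j0, j1, j2, j3, j4, Fin.ext_iff]
    · rw [show i = j3 hq from Fin.ext h]; simp [j0, j1, j2, j3, j4, Fin.ext_iff]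
    · rw [show i = j4 hq from Fin.ext h]; simp [j0, j1, j2, j3, j4, Fin.ext_iff]
    · rw [h5 i h]
      simp only [Fin.ext_iff, j0, j1, j2, j3, j4]
      split_ifs <;> omega
  rw [Finset.sum_congr rfl fun i _ => hpt i]
  simp [Finset.sum_add_distrib, Finset.sum_ite_eq']

/-- Remark (r:q>4): for `q ≥ 5`, the set `{2e_1 + e_2, e_3 + e_4 + e_5}`
(corresponding to `{ε_1²ε_2, ε_3ε_4ε_5}`) is a Scarf face of `E_q^3` that is
not contained in any set `aU` with `|a| ≤ 3`; hence the Scarf complex of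
`E_q^3` strictly contains `U^3_q`. -/
theorem stmt15 (q : ℕ) (hq : 5 ≤ q) :
    IsScarf q 3 {vA q, vB q} ∧
    ∀ c : Fin q → ℕ, ∑ i, c i ≤ 3 →
      ¬ ({vA q, vB q} : Finset (Fin q → ℕ)) ⊆ aUF q 3 c := by
  -- specific label values
  have l0 : eLabel {vA q, vB q} ({j0 hq} : Finset (Fin q)) = 2 := by
    rw [labelσ hq]; simp [j0, j1, j2, j3, j4, Fin.ext_iff]
  have l2 : eLabel {vA q, vB q} ({j2 hq} : Finset (Fin q)) = 1 := by
    rw [labelσ hq]; simp [j0, j1, j2, j3, j4, Fin.ext_iff]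
  have l02 : eLabel {vA q, vB q} ({j0 hq, j2 hq} : Finset (Fin q)) = 2 := by
    rw [labelσ hq]; simp [j0, j1, j2, j3, j4, Fin.ext_iff]
  have l03 : eLabel {vA q, vB q} ({j0 hq, j3 hq} : Finset (Fin q)) = 2 := by
    rw [labelσ hq]; simp [j0, j1, j2, j3, j4, Fin.ext_iff]
  have l04 : eLabel {vA q, vB q} ({j0 hq, j4 hq} : Finset (Fin q)) = 2 := by
    rw [labelσ hq]; simp [j0, j1, j2, j3, j4, Fin.ext_iff]
  have l12 : eLabel {vA q, vB q} ({j1 hq, j2 hq} : Finset (Fin q)) = 1 := by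
    rw [labelσ hq]; simp [j0, j1, j2, j3, j4, Fin.ext_iff]
  have l13 : eLabel {vA q, vB q} ({j1 hq, j3 hq} : Finset (Fin q)) = 1 := by
    rw [labelσ hq]; simp [j0, j1, j2, j3, j4, Fin.ext_iff]
  have l14 : eLabel {vA q, vB q} ({j1 hq, j4 hq} : Finset (Fin q)) = 1 := by
    rw [labelσ hq]; simp [j0, j1, j2, j3, j4, Fin.ext_iff]
  have l023 : eLabel {vA q, vB q} ({j0 hq, j2 hq, j3 hq} : Finset (Fin q)) = 2 := by
    rw [labelσ hq]; simp [j0, j1, j2, j3, j4, Fin.ext_iff]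
  have l024 : eLabel {vA q, vB q} ({j0 hq, j2 hq, j4 hq} : Finset (Fin q)) = 2 := by
    rw [labelσ hq]; simp [j0, j1, j2, j3, j4, Fin.ext_iff]
  have l034 : eLabel {vA q, vB q} ({j0 hq, j3 hq, j4 hq} : Finset (Fin q)) = 2 := by
    rw [labelσ hq]; simp [j0, j1, j2, j3, j4, Fin.ext_iff]
  constructor
  · refine ⟨⟨vA q, Finset.mem_insert_self _ _⟩, ?_, ?_⟩
    · intro a ha
      rcases Finset.mem_insert.1 ha with rfl | ha
      · rw [sumA hq]; simp
      · rw [Finset.mem_singleton.1 ha, sumB hq]; simp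
    · intro τ hτne hτ3 hL
      have hle : ∀ c ∈ τ, ∀ A : Finset (Fin q), A.Nonempty →
          ∑ i ∈ A, c i ≤ eLabel {vA q, vB q} A := by
        intro c hc A hA
        rw [← hL A hA]
        exact Finset.le_sup hc
      have key : ∀ c ∈ τ, c = vA q ∨ c = vB q := by
        intro c hc
        have h5 : ∀ i : Fin q, 5 ≤ i.val → c i = 0 := by
          intro i hi
          have h1 := hle c hc {i} (Finset.singleton_nonempty i)
          rw [Finset.sum_singleton, labelσ hq] at h1
          simp only [Finset.mem_singleton, Fin.ext_iff, j0, j1, j2, j3, j4] at h1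
          split_ifs at h1 <;> omega
        have hsum := hτ3 c hc
        rw [sum_five hq c h5] at hsum
        have pair : ∀ jk jl : Fin q, jk ∉ ({jl} : Finset (Fin q)) →
            c jk + c jl ≤ eLabel {vA q, vB q} {jk, jl} := by
          intro jk jl hne
          have h := hle c hc {jk, jl} ⟨jk, Finset.mem_insert_self _ _⟩
          rwa [Finset.sum_insert hne, Finset.sum_singleton] at h
        have triple : ∀ jk jl jm : Fin q, jk ∉ ({jl, jm} : Finset (Fin q)) →
            jl ∉ ({jm} : Finset (Fin q)) →
            c jk + (c jl + c jm) ≤ eLabel {vA q, vB q} {jk, jl, jm} := by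
          intro jk jl jm h1 h2
          have h := hle c hc {jk, jl, jm} ⟨jk, Finset.mem_insert_self _ _⟩
          rwa [Finset.sum_insert h1, Finset.sum_insert h2, Finset.sum_singleton] at h
        have h02 := (l02 ▸ pair (j0 hq) (j2 hq) (by simp [j0, j2, Fin.ext_iff]))
        have h03 := (l03 ▸ pair (j0 hq) (j3 hq) (by simp [j0, j3, Fin.ext_iff]))
        have h04 := (l04 ▸ pair (j0 hq) (j4 hq) (by simp [j0, j4, Fin.ext_iff]))
        have h12 := (l12 ▸ pair (j1 hq) (j2 hq) (by simp [j1, j2, Fin.ext_iff]))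
        have h13 := (l13 ▸ pair (j1 hq) (j3 hq) (by simp [j1, j3, Fin.ext_iff]))
        have h14 := (l14 ▸ pair (j1 hq) (j4 hq) (by simp [j1, j4, Fin.ext_iff]))
        have h023 := (l023 ▸ triple (j0 hq) (j2 hq) (j3 hq)
          (by simp [j0, j2, j3, Fin.ext_iff]) (by simp [j2, j3, Fin.ext_iff]))
        have h024 := (l024 ▸ triple (j0 hq) (j2 hq) (j4 hq)
          (by simp [j0, j2, j4, Fin.ext_iff]) (by simp [j2, j4, Fin.ext_iff]))
        have h034 := (l034 ▸ triple (j0 hq) (j3 hq) (j4 hq)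
          (by simp [j0, j3, j4, Fin.ext_iff]) (by simp [j3, j4, Fin.ext_iff]))
        have hdi : (c (j0 hq) = 2 ∧ c (j1 hq) = 1 ∧ c (j2 hq) = 0 ∧ c (j3 hq) = 0
              ∧ c (j4 hq) = 0) ∨
            (c (j0 hq) = 0 ∧ c (j1 hq) = 0 ∧ c (j2 hq) = 1 ∧ c (j3 hq) = 1
              ∧ c (j4 hq) = 1) := by
          omega
        rcases hdi with ⟨e0, e1, e2, e3, e4⟩ | ⟨e0, e1, e2, e3, e4⟩
        · left
          funext i
          rcases (show i.val = 0 ∨ i.val = 1 ∨ i.val = 2 ∨ i.val = 3 ∨ i.val = 4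
              ∨ 5 ≤ i.val by omega) with h|h|h|h|h|h
          · rw [show i = j0 hq from Fin.ext h, e0]; simp [vA, j0]
          · rw [show i = j1 hq from Fin.ext h, e1]; simp [vA, j1]
          · rw [show i = j2 hq from Fin.ext h, e2]; simp [vA, j2]
          · rw [show i = j3 hq from Fin.ext h, e3]; simp [vA, j3]
          · rw [show i = j4 hq from Fin.ext h, e4]; simp [vA, j4]
          · rw [h5 i h]
            simp only [vA]
            split_ifs <;> omega
        · right
          funext i
          rcases (show i.val = 0 ∨ i.val = 1 ∨ i.val = 2 ∨ i.val = 3 ∨ i.val = 4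
              ∨ 5 ≤ i.val by omega) with h|h|h|h|h|h
          · rw [show i = j0 hq from Fin.ext h, e0]; simp [vB, j0]
          · rw [show i = j1 hq from Fin.ext h, e1]; simp [vB, j1]
          · rw [show i = j2 hq from Fin.ext h, e2]; simp [vB, j2]
          · rw [show i = j3 hq from Fin.ext h, e3]; simp [vB, j3]
          · rw [show i = j4 hq from Fin.ext h, e4]; simp [vB, j4]
          · rw [h5 i h]
            simp only [vB]
            split_ifs <;> omega
      have hvA : vA q ∈ τ := by
        obtain ⟨b, hbτ, hb⟩ := Finset.exists_mem_eq_sup τ hτne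
          (fun a => ∑ i ∈ ({j0 hq} : Finset (Fin q)), a i)
        have h2 : eLabel τ ({j0 hq} : Finset (Fin q)) = 2 := by
          rw [hL _ (Finset.singleton_nonempty _), l0]
        unfold eLabel at h2
        rw [hb, Finset.sum_singleton] at h2
        rcases key b hbτ with rfl | rfl
        · exact hbτ
        · exfalso; simp [vB, j0] at h2
      have hvB : vB q ∈ τ := by
        obtain ⟨b, hbτ, hb⟩ := Finset.exists_mem_eq_sup τ hτne
          (fun a => ∑ i ∈ ({j2 hq} : Finset (Fin q)), a i)
        have h2 : eLabel τ ({j2 hq} : Finset (Fin q)) = 1 := by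
          rw [hL _ (Finset.singleton_nonempty _), l2]
        unfold eLabel at h2
        rw [hb, Finset.sum_singleton] at h2
        rcases key b hbτ with rfl | rfl
        · exfalso; simp [vA, j2] at h2
        · exact hbτ
      apply Finset.Subset.antisymm
      · intro c hc
        rcases key c hc with rfl | rfl
        · exact Finset.mem_insert_self _ _
        · exact Finset.mem_insert_of_mem (Finset.mem_singleton_self _)
      · intro x hx
        rcases Finset.mem_insert.1 hx with rfl | hx
        · exact hvA
        · rw [Finset.mem_singleton.1 hx]; exact hvB
  · intro c hcs hsub
    have hA := hsub (Finset.mem_insert_self _ _)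
    have hB := hsub (Finset.mem_insert_of_mem (Finset.mem_singleton_self _))
    simp only [aUF, Finset.mem_filter, Finset.mem_Icc] at hA hB
    have e1 : vA q (j0 hq) ≤ c (j0 hq) + 1 := by
      have := hA.1.2
      rw [Pi.le_def] at this
      simpa using this (j0 hq)
    have e2 : c (j0 hq) ≤ vB q (j0 hq) := by
      have := hB.1.1
      rw [Pi.le_def] at this
      exact this (j0 hq)
    rw [show vA q (j0 hq) = 2 by simp [vA, j0]] at e1
    rw [show vB q (j0 hq) = 0 by simp [vB, j0]] at e2
    omega
end
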